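/- arXiv:2202.10766 — 4 statements merged into one kernel-verified Lean document; each statement's English description precedes it below -/
import Mathlib

section
/- For every Datalog program Σ, every annotated database (D,K,λ) with K a commutative ω-continuous semiring (and, for AM, additionally such that every subset of K has a greatest lower bound with respect to the natural order), and every fact α, it holds that AM(Σ,D,K,λ,α) ⊑ AT(Σ,D,K,λ,α) and SAM(Σ,D,K,λ,α) ⊑ AT(Σ,D,K,λ,α). -/
attribute [local instance] Classical.propDecidable

namespace Datalog

/-- Terms are built from constants and variables. -/
inductive Term (C V : Type) : Type
  | const : C → Term C V
  | var : V → Term C V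

/-- An atom over predicates `P` with arguments of type `τ`. -/
structure Atom (P τ : Type) : Type where
  pred : P
  args : List τ

/-- A fact (ground atom) has constants as arguments. -/
abbrev Fact (P C : Type) := Atom P C

/-- Substitution of a variable assignment in a term. -/
def Term.subst {C : Type} {n : ℕ} (σ : Fin n → C) : Term C (Fin n) → C
  | Term.const c => c
  | Term.var v => σ v

/-- Substitution of a variable assignment in an atom, producing a fact. -/
def Atom.subst {P C : Type} {n : ℕ} (σ : Fin n → C) (a : Atom P (Term C (Fin n))) : Fact P C :=
  ⟨a.pred, a.args.map (Term.subst σ)⟩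

/-- Renaming of predicates in an atom. -/
def Atom.mapPred {P Q τ : Type} (f : P → Q) (a : Atom P τ) : Atom Q τ := ⟨f a.pred, a.args⟩

/-- Turn a fact into a (ground) rule atom. -/
def Atom.toRuleAtom {P C : Type} (n : ℕ) (a : Fact P C) : Atom P (Term C (Fin n)) :=
  ⟨a.pred, a.args.map Term.const⟩

/-- A (normalized) Datalog rule `φ(x⃗,y⃗) → H(x⃗)`: the body is a conjunction of atoms over
variables `x⃗ ∪ y⃗` (every variable of the rule occurs in the body), the head a single atom. -/
structure Rule (P C : Type) : Type where
  nvars : ℕ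
  nbody : ℕ
  body : Fin nbody → Atom P (Term C (Fin nvars))
  head : Atom P (Term C (Fin nvars))
  vars_in_body : ∀ v : Fin nvars, ∃ i : Fin nbody, Term.var v ∈ (body i).args

variable {P C K : Type}

/-- A set of facts is closed under the rules of a program. -/
def ClosedUnder (prog : Set (Rule P C)) (I : Set (Fact P C)) : Prop :=
  ∀ r ∈ prog, ∀ σ : Fin r.nvars → C,
    (∀ i, (r.body i).subst σ ∈ I) → r.head.subst σ ∈ I

/-- `Σ, D ⊨ α` : the fact `α` belongs to every set of facts containing `D`
and closed under the rules of `Σ`. -/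
def Entails (prog : Set (Rule P C)) (D : Set (Fact P C)) (a : Fact P C) : Prop :=
  ∀ I : Set (Fact P C), D ⊆ I → ClosedUnder prog I → a ∈ I

/-- Derivation trees of a fact w.r.t. a program and a database: leaves are labeled by facts of
`D`; an inner node is labeled by a rule `r ∈ Σ` together with a homomorphism `σ`, its children
corresponding bijectively to the body atoms of `r`, and derives the fact `σ(head r)`. -/
inductive DTree {P C : Type} (prog : Set (Rule P C)) (D : Set (Fact P C)) : Fact P C → Type
  | leaf (a : Fact P C) (ha : a ∈ D) : DTree prog D a
  | node (r : Rule P C) (hr : r ∈ prog) (σ : Fin r.nvars → C)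
      (children : ∀ i : Fin r.nbody, DTree prog D ((r.body i).subst σ)) :
      DTree prog D (r.head.subst σ)

namespace DTree

variable {prog : Set (Rule P C)} {D : Set (Fact P C)}

/-- `Λ(t)`: the product of the annotations of the leaves of `t`. -/
def weight [CommSemiring K] (lam : Fact P C → K) : ∀ {a : Fact P C}, DTree prog D a → K
  | _, .leaf a _ => lam a
  | _, .node r _ _ ch => ∏ i : Fin r.nbody, weight lam (ch i)

/-- The depth of a derivation tree. -/
def depth : ∀ {a : Fact P C}, DTree prog D a → ℕ
  | _, .leaf _ _ => 0
  | _, .node r _ _ ch => (Finset.univ.sup fun i : Fin r.nbody => depth (ch i)) + 1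

/-- A derivation tree of `a` is of minimal depth if no derivation tree of `a` is of
smaller depth. -/
def minimalDepth {a : Fact P C} (t : DTree prog D a) : Prop :=
  ∀ t' : DTree prog D a, t.depth ≤ t'.depth

/-- A derivation tree is hereditary minimal-depth if every subtree rooted at an inner node
is a minimal-depth derivation tree of the fact it derives. -/
def hereditaryMinimal : ∀ {a : Fact P C}, DTree prog D a → Prop
  | _, .leaf _ _ => True
  | _, .node r hr σ ch =>
      minimalDepth (.node r hr σ ch) ∧ ∀ i, hereditaryMinimal (ch i)

/-- `t.avoid s` : no fact labeling a node of `t` belongs to `s`, nor is repeated along a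
root-to-leaf path. -/
def avoid : Set (Fact P C) → ∀ {a : Fact P C}, DTree prog D a → Prop
  | s, _, .leaf a _ => a ∉ s
  | s, _, .node r _ σ ch =>
      r.head.subst σ ∉ s ∧ ∀ i, avoid (insert (r.head.subst σ) s) (ch i)

/-- A derivation tree is non-recursive if it does not contain two nodes labeled with the same
fact such that one is a descendant of the other. -/
def nonRecursive {a : Fact P C} (t : DTree prog D a) : Prop := t.avoid ∅

/-- `t.hasLeaf x` : `x` labels some leaf of `t`. -/
def hasLeaf (x : Fact P C) : ∀ {a : Fact P C}, DTree prog D a → Prop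
  | _, .leaf a _ => a = x
  | _, .node _ _ _ ch => ∃ i, hasLeaf x (ch i)

end DTree

/-- The finite partial sums of `f` over the set `S`. -/
def partialSums {T : Type} [AddCommMonoid K] (S : Set T) (f : T → K) : Set K :=
  { x | ∃ F : Finset T, ↑F ⊆ S ∧ x = ∑ t ∈ F, f t }

/-- The (possibly infinite) sum of `f` over `S`, i.e. the least upper bound of the finite
partial sums (junk value `0` if no least upper bound exists). -/
noncomputable def setSum {T : Type} [AddCommMonoid K] [PartialOrder K]
    (S : Set T) (f : T → K) : K :=
  if h : ∃ s, IsLUB (partialSums S f) s then h.choose else 0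

/-- The greatest lower bound of a set of semiring elements (junk value `0` if none exists). -/
noncomputable def setInf [Zero K] [PartialOrder K] (S : Set K) : K :=
  if h : ∃ z, IsGLB S z then h.choose else 0

/-- A commutative ω-continuous semiring: the natural order `a ≤ b ↔ ∃ c, a + c = b` is a
partial order, every ω-chain has a least upper bound, and `+` and `×` preserve these
least upper bounds. -/
class OmegaCommSemiring (K : Type) extends CommSemiring K, PartialOrder K where
  le_iff_exists_add : ∀ a b : K, a ≤ b ↔ ∃ c, a + c = b
  chain_lub : ∀ f : ℕ → K, Monotone f → ∃ s, IsLUB (Set.range f) s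
  add_lub : ∀ (f : ℕ → K) (a s : K), Monotone f → IsLUB (Set.range f) s →
    IsLUB (Set.range fun n => a + f n) (a + s)
  mul_lub : ∀ (f : ℕ → K) (a s : K), Monotone f → IsLUB (Set.range f) s →
    IsLUB (Set.range fun n => a * f n) (a * s)

/-- A positive semiring: a product is zero iff one factor is, a sum is zero iff both
summands are. -/
def PositiveSemiring (K : Type) [CommSemiring K] : Prop :=
  (∀ a b : K, a * b = 0 ↔ a = 0 ∨ b = 0) ∧ (∀ a b : K, a + b = 0 ↔ a = 0 ∧ b = 0)

/-- An annotated database: a set of facts together with an annotation function assigning a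
semiring element to every fact (`0` outside the database). -/
structure AnnDB (P C K : Type) [Zero K] : Type where
  facts : Set (Fact P C)
  ann : Fact P C → K
  ann_eq_zero : ∀ a ∉ facts, ann a = 0

/-- Union of two annotated databases: annotations are added pointwise. -/
noncomputable def AnnDB.union [AddCommMonoid K] (d₁ d₂ : AnnDB P C K) : AnnDB P C K where
  facts := d₁.facts ∪ d₂.facts
  ann a := d₁.ann a + d₂.ann a
  ann_eq_zero a ha := by
    show d₁.ann a + d₂.ann a = 0
    rw [d₁.ann_eq_zero a fun h => ha (Set.mem_union_left _ h),
      d₂.ann_eq_zero a fun h => ha (Set.mem_union_right _ h), add_zero]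

/-- The facts derivable from `I` by one application of a rule of `prog`. -/
def derivable (prog : Set (Rule P C)) (I : Set (Fact P C)) : Set (Fact P C) :=
  { a | ∃ r ∈ prog, ∃ σ : Fin r.nvars → C,
      (∀ i, (r.body i).subst σ ∈ I) ∧ r.head.subst σ = a }

/-- The relational provenance of the immediate consequences: the sum over all rules and
homomorphisms deriving `a` of the product of the annotations of the body facts. -/
noncomputable def ruleSum [CommSemiring K] (prog : Set (Rule P C)) (I : Set (Fact P C))
    (lam : Fact P C → K) (a : Fact P C) : K :=
  ∑ᶠ (p : (r : Rule P C) × (Fin r.nvars → C))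
      (_ : p.1 ∈ prog ∧ (∀ i, (p.1.body i).subst p.2 ∈ I) ∧ p.1.head.subst p.2 = a),
    ∏ i : Fin p.1.nbody, lam ((p.1.body i).subst p.2)

/-- The annotation-aware immediate consequence operator `T_Σ`. -/
noncomputable def Tcons [CommSemiring K] (prog : Set (Rule P C)) (db : AnnDB P C K) :
    AnnDB P C K where
  facts := derivable prog db.facts
  ann a := if a ∈ derivable prog db.facts then ruleSum prog db.facts db.ann a else 0
  ann_eq_zero a ha := if_neg ha

/-- The operator `Δ_Σ`: `T_Σ` restricted to the newly derived facts. -/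
noncomputable def Dcons [CommSemiring K] (prog : Set (Rule P C)) (db : AnnDB P C K) :
    AnnDB P C K where
  facts := (Tcons prog db).facts \ db.facts
  ann a := if a ∈ (Tcons prog db).facts \ db.facts then (Tcons prog db).ann a else 0
  ann_eq_zero a ha := if_neg ha

/-- The naive evaluation sequence `I_n^0 := (D,K,λ)`, `I_n^{i+1} := T_Σ(I_n^i) ∪ (D,K,λ)`. -/
noncomputable def naiveSeq [CommSemiring K] (prog : Set (Rule P C)) (db : AnnDB P C K) :
    ℕ → AnnDB P C K
  | 0 => db
  | i + 1 => (Tcons prog (naiveSeq prog db i)).union db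

/-- The naive execution provenance semantics: the least upper bound of the annotations of `a`
along the naive evaluation sequence (and `0` if `a` is never derived). -/
noncomputable def NE [CommSemiring K] [PartialOrder K] (prog : Set (Rule P C))
    (db : AnnDB P C K) (a : Fact P C) : K :=
  if ∃ i, a ∈ (naiveSeq prog db i).facts then
    (if h : ∃ s, IsLUB (Set.range fun i => (naiveSeq prog db i).ann a) s then h.choose else 0)
  else 0

/-- The optimized naive evaluation sequence, which stops as soon as the target fact is
derived. -/
noncomputable def optSeq [CommSemiring K] (prog : Set (Rule P C)) (db : AnnDB P C K)
    (target : Fact P C) : ℕ → AnnDB P C K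
  | 0 => db
  | i + 1 =>
      if target ∈ (optSeq prog db target i).facts then optSeq prog db target i
      else (Tcons prog (optSeq prog db target i)).union db

/-- The optimized execution provenance semantics: the annotation of the target fact at the
stabilization point of the optimized naive evaluation sequence. -/
noncomputable def OE [CommSemiring K] (prog : Set (Rule P C)) (db : AnnDB P C K)
    (target : Fact P C) : K :=
  if h : ∃ k, ∀ ℓ, k ≤ ℓ → optSeq prog db target ℓ = optSeq prog db target k then
    (optSeq prog db target h.choose).ann target
  else 0

/-- The seminaive evaluation sequence `I_sn^0 := (D,K,λ)`, `I_sn^{i+1} := I_sn^i ∪ Δ_Σ(I_sn^i)`. -/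
noncomputable def semiSeq [CommSemiring K] (prog : Set (Rule P C)) (db : AnnDB P C K) :
    ℕ → AnnDB P C K
  | 0 => db
  | i + 1 => (semiSeq prog db i).union (Dcons prog (semiSeq prog db i))

/-- The seminaive execution provenance semantics: the annotation of the fact at the
stabilization point of the seminaive evaluation sequence. -/
noncomputable def SNE [CommSemiring K] (prog : Set (Rule P C)) (db : AnnDB P C K)
    (a : Fact P C) : K :=
  if h : ∃ k, ∀ ℓ, k ≤ ℓ → semiSeq prog db ℓ = semiSeq prog db k then
    (semiSeq prog db h.choose).ann a
  else 0

/-- The all-tree provenance semantics `AT`: the (possibly infinite) sum, over all derivation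
trees of `a`, of the product of the annotations of the leaves. -/
noncomputable def AT [CommSemiring K] [PartialOrder K] (prog : Set (Rule P C))
    (db : AnnDB P C K) (a : Fact P C) : K :=
  setSum (Set.univ : Set (DTree prog db.facts a)) fun t => t.weight db.ann

/-- The non-recursive tree provenance semantics `NRT`. -/
noncomputable def NRT [CommSemiring K] (prog : Set (Rule P C)) (db : AnnDB P C K)
    (a : Fact P C) : K :=
  ∑ᶠ (t : DTree prog db.facts a) (_ : t.nonRecursive), t.weight db.ann

/-- The minimal depth tree provenance semantics `MDT`. -/
noncomputable def MDT [CommSemiring K] (prog : Set (Rule P C)) (db : AnnDB P C K)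
    (a : Fact P C) : K :=
  ∑ᶠ (t : DTree prog db.facts a) (_ : t.minimalDepth), t.weight db.ann

/-- The hereditary minimal depth tree provenance semantics `HMDT`. -/
noncomputable def HMDT [CommSemiring K] (prog : Set (Rule P C)) (db : AnnDB P C K)
    (a : Fact P C) : K :=
  ∑ᶠ (t : DTree prog db.facts a) (_ : t.hereditaryMinimal), t.weight db.ann

/-- `σ'` agrees with `σ` on the head variables of `r` (i.e. `h'(x⃗) = h(x⃗)`). -/
def headAgree (r : Rule P C) (σ σ' : Fin r.nvars → C) : Prop :=
  ∀ v : Fin r.nvars, Term.var v ∈ r.head.args → σ' v = σ v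

/-- A `K`-annotated interpretation `(I,μ)` is a model of `Σ` and `(D,K,λ)`. -/
def IsAnnModel [CommSemiring K] [PartialOrder K] (prog : Set (Rule P C)) (db : AnnDB P C K)
    (I : Set (Fact P C)) (μ : Fact P C → K) : Prop :=
  db.facts ⊆ I ∧ (∀ a ∈ db.facts, db.ann a ≤ μ a) ∧
  ∀ r ∈ prog, ∀ σ : Fin r.nvars → C, (∀ i, (r.body i).subst σ ∈ I) →
    r.head.subst σ ∈ I ∧
    setSum {σ' : Fin r.nvars → C | (∀ i, (r.body i).subst σ' ∈ I) ∧ headAgree r σ σ'}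
        (fun σ' => ∏ i : Fin r.nbody, μ ((r.body i).subst σ'))
      ≤ μ (r.head.subst σ)

/-- The annotated model-based provenance semantics `AM`: the greatest lower bound, over all
annotated models, of the annotation of `a` (and `0` if `a` is not entailed). -/
noncomputable def AM [CommSemiring K] [PartialOrder K] (prog : Set (Rule P C))
    (db : AnnDB P C K) (a : Fact P C) : K :=
  if Entails prog db.facts a then
    setInf { x | ∃ I μ, IsAnnModel prog db I μ ∧ μ a = x }
  else 0

/-- A `K`-set-annotated interpretation `(I,μ)` is a model of `Σ` and `(D,K,λ)`. -/
def IsSetAnnModel [CommSemiring K] (prog : Set (Rule P C)) (db : AnnDB P C K)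
    (I : Set (Fact P C)) (μ : Fact P C → Set K) : Prop :=
  db.facts ⊆ I ∧ (∀ a ∈ db.facts, db.ann a ∈ μ a) ∧
  ∀ r ∈ prog, ∀ σ : Fin r.nvars → C, (∀ i, (r.body i).subst σ ∈ I) →
    r.head.subst σ ∈ I ∧
    ∀ g : Fin r.nbody → K, (∀ i, g i ∈ μ ((r.body i).subst σ)) →
      (∏ i, g i) ∈ μ (r.head.subst σ)

/-- The set-annotated model-based provenance semantics `SAM`: the sum of the elements of the
intersection, over all set-annotated models, of the annotation set of `a`. -/
noncomputable def SAM [CommSemiring K] [PartialOrder K] (prog : Set (Rule P C))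
    (db : AnnDB P C K) (a : Fact P C) : K :=
  setSum { k : K | ∀ I μ, IsSetAnnModel prog db I μ → k ∈ μ a } id

/-- The schema of a program: the predicates occurring in its rules. -/
def progSchema (prog : Set (Rule P C)) : Set P :=
  { p | ∃ r ∈ prog, r.head.pred = p ∨ ∃ i, (r.body i).pred = p }

/-- The schema of a database: the predicates occurring in its facts. -/
def dbSchema (D : Set (Fact P C)) : Set P := { p | ∃ a ∈ D, a.pred = p }

/-- The domain of a database: the constants occurring in its facts. -/
def dbConsts (D : Set (Fact P C)) : Set C := { c | ∃ a ∈ D, c ∈ a.args }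

/-- A ground rule built from a list of facts (the body) and a fact (the head). -/
def factRule (body : List (Fact P C)) (head : Fact P C) : Rule P C where
  nvars := 0
  nbody := body.length
  body := fun i => (body.get i).toRuleAtom 0
  head := head.toRuleAtom 0
  vars_in_body := fun v => v.elim0

/-- A ground instance of a rule. -/
def Rule.ground (r : Rule P C) (σ : Fin r.nvars → C) : Rule P C where
  nvars := 0
  nbody := r.nbody
  body := fun i => ((r.body i).subst σ).toRuleAtom 0
  head := (r.head.subst σ).toRuleAtom 0
  vars_in_body := fun v => v.elim0

/-- The grounding `Σ_D` of a program w.r.t. the domain of a database. -/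
def grounding (prog : Set (Rule P C)) (D : Set (Fact P C)) : Set (Rule P C) :=
  { r' | ∃ r ∈ prog, ∃ σ : Fin r.nvars → C, (∀ v, σ v ∈ dbConsts D) ∧ r' = r.ground σ }

/-- Renaming of predicates in a rule. -/
def Rule.mapPred {Q : Type} (f : P → Q) (r : Rule P C) : Rule Q C where
  nvars := r.nvars
  nbody := r.nbody
  body := fun i => (r.body i).mapPred f
  head := r.head.mapPred f
  vars_in_body := fun v => r.vars_in_body v

/-- An adornment of a rule: exactly one body atom is adorned (sent to the `Sum.inr` copy of
the predicates), the head is adorned or not, all the other atoms keep their predicates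
(`Sum.inl` copy). -/
def adornRule (r : Rule P C) (i : Fin r.nbody) (adornHead : Bool) : Rule (P ⊕ P) C where
  nvars := r.nvars
  nbody := r.nbody
  body := fun j => if j = i then (r.body j).mapPred Sum.inr else (r.body j).mapPred Sum.inl
  head := if adornHead then r.head.mapPred Sum.inr else r.head.mapPred Sum.inl
  vars_in_body := by
    intro v
    obtain ⟨j, hj⟩ := r.vars_in_body v
    refine ⟨j, ?_⟩
    try dsimp only
    split <;> exact hj

/-- The set of adornments of a rule. -/
def adornedRules (r : Rule P C) : Set (Rule (P ⊕ P) C) :=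
  { r' | ∃ (i : Fin r.nbody) (b : Bool), r' = adornRule r i b }

/-! ### Auxiliary development for statement_0 -/

section OrderLemmas

variable {K : Type} [OmegaCommSemiring K]

lemma ocs_le_iff {a b : K} : a ≤ b ↔ ∃ c, a + c = b :=
  OmegaCommSemiring.le_iff_exists_add a b

lemma ocs_zero_le (a : K) : 0 ≤ a := ocs_le_iff.mpr ⟨a, zero_add a⟩

lemma ocs_add_le_add {a b c d : K} (h1 : a ≤ b) (h2 : c ≤ d) : a + c ≤ b + d := by
  obtain ⟨e, rfl⟩ := ocs_le_iff.mp h1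
  obtain ⟨f, rfl⟩ := ocs_le_iff.mp h2
  exact ocs_le_iff.mpr ⟨e + f, by ring⟩

lemma ocs_mul_le_mul {a b c d : K} (h1 : a ≤ b) (h2 : c ≤ d) : a * c ≤ b * d := by
  obtain ⟨e, rfl⟩ := ocs_le_iff.mp h1
  obtain ⟨f, rfl⟩ := ocs_le_iff.mp h2
  exact ocs_le_iff.mpr ⟨a * f + e * c + e * f, by ring⟩

lemma ocs_sum_le_sum {ι : Type*} {F : Finset ι} {f g : ι → K} (h : ∀ j ∈ F, f j ≤ g j) :
    ∑ j ∈ F, f j ≤ ∑ j ∈ F, g j := by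
  induction F using Finset.cons_induction with
  | empty => simp
  | cons a s ha ih =>
    simp only [Finset.sum_cons]
    exact ocs_add_le_add (h a (Finset.mem_cons_self a s))
      (ih fun j hj => h j (Finset.mem_cons_of_mem hj))

lemma ocs_sum_le_sum_of_subset {ι : Type*} {F G : Finset ι} (h : F ⊆ G) (f : ι → K) :
    (∑ j ∈ F, f j) ≤ ∑ j ∈ G, f j :=
  ocs_le_iff.mpr ⟨∑ j ∈ G \ F, f j, by rw [add_comm]; exact Finset.sum_sdiff h⟩

lemma isLUB_constRange (c : K) : IsLUB (Set.range fun _ : ℕ => c) c := by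
  rw [Set.range_const]; exact isLUB_singleton

lemma isLUB_mulChain {g h : ℕ → K} {s t : K} (hg : Monotone g) (hh : Monotone h)
    (hs : IsLUB (Set.range g) s) (ht : IsLUB (Set.range h) t) :
    IsLUB (Set.range fun m => g m * h m) (s * t) := by
  constructor
  · rintro x ⟨m, rfl⟩
    exact ocs_mul_le_mul (hs.1 ⟨m, rfl⟩) (ht.1 ⟨m, rfl⟩)
  · intro c hc
    have h1 : IsLUB (Set.range fun n => s * h n) (s * t) :=
      OmegaCommSemiring.mul_lub h s t hh ht
    refine h1.2 ?_
    rintro x ⟨n, rfl⟩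
    have h2 : IsLUB (Set.range fun k => h n * g k) (h n * s) :=
      OmegaCommSemiring.mul_lub g (h n) s hg hs
    show s * h n ≤ c
    rw [mul_comm]
    refine h2.2 ?_
    rintro y ⟨k, rfl⟩
    calc h n * g k ≤ h (n ⊔ k) * g (n ⊔ k) :=
          ocs_mul_le_mul (hh le_sup_left) (hg le_sup_right)
      _ = g (n ⊔ k) * h (n ⊔ k) := mul_comm _ _
      _ ≤ c := hc ⟨n ⊔ k, rfl⟩

lemma isLUB_addChain {g h : ℕ → K} {s t : K} (hg : Monotone g) (hh : Monotone h)
    (hs : IsLUB (Set.range g) s) (ht : IsLUB (Set.range h) t) :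
    IsLUB (Set.range fun m => g m + h m) (s + t) := by
  constructor
  · rintro x ⟨m, rfl⟩
    exact ocs_add_le_add (hs.1 ⟨m, rfl⟩) (ht.1 ⟨m, rfl⟩)
  · intro c hc
    have h1 : IsLUB (Set.range fun n => s + h n) (s + t) :=
      OmegaCommSemiring.add_lub h s t hh ht
    refine h1.2 ?_
    rintro x ⟨n, rfl⟩
    have h2 : IsLUB (Set.range fun k => h n + g k) (h n + s) :=
      OmegaCommSemiring.add_lub g (h n) s hg hs
    show s + h n ≤ c
    rw [add_comm]
    refine h2.2 ?_
    rintro y ⟨k, rfl⟩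
    calc h n + g k ≤ h (n ⊔ k) + g (n ⊔ k) :=
          ocs_add_le_add (hh le_sup_left) (hg le_sup_right)
      _ = g (n ⊔ k) + h (n ⊔ k) := add_comm _ _
      _ ≤ c := hc ⟨n ⊔ k, rfl⟩

lemma monotone_finsetProd {ι : Type*} {F : Finset ι} {c : ι → ℕ → K}
    (hm : ∀ j ∈ F, Monotone (c j)) : Monotone fun m => ∏ j ∈ F, c j m := by
  induction F using Finset.cons_induction with
  | empty => simp only [Finset.prod_empty]; exact monotone_const
  | cons a s ha ih =>
    intro m n hmn
    simp only [Finset.prod_cons]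
    exact ocs_mul_le_mul (hm a (Finset.mem_cons_self a s) hmn)
      ((ih fun j hj => hm j (Finset.mem_cons_of_mem hj)) hmn)

lemma monotone_finsetSum {ι : Type*} {F : Finset ι} {c : ι → ℕ → K}
    (hm : ∀ j ∈ F, Monotone (c j)) : Monotone fun m => ∑ j ∈ F, c j m :=
  fun _ _ hmn => ocs_sum_le_sum fun j hj => hm j hj hmn

lemma isLUB_finsetProd {ι : Type*} (F : Finset ι) (c : ι → ℕ → K) (s : ι → K)
    (hm : ∀ j ∈ F, Monotone (c j)) (hl : ∀ j ∈ F, IsLUB (Set.range (c j)) (s j)) :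
    IsLUB (Set.range fun m => ∏ j ∈ F, c j m) (∏ j ∈ F, s j) := by
  induction F using Finset.cons_induction with
  | empty => simp only [Finset.prod_empty]; exact isLUB_constRange 1
  | cons a t hat ih =>
    simp only [Finset.prod_cons]
    exact isLUB_mulChain (hm a (Finset.mem_cons_self a t))
      (monotone_finsetProd fun j hj => hm j (Finset.mem_cons_of_mem hj))
      (hl a (Finset.mem_cons_self a t))
      (ih (fun j hj => hm j (Finset.mem_cons_of_mem hj))
        (fun j hj => hl j (Finset.mem_cons_of_mem hj)))

lemma isLUB_finsetSum {ι : Type*} (F : Finset ι) (c : ι → ℕ → K) (s : ι → K)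
    (hm : ∀ j ∈ F, Monotone (c j)) (hl : ∀ j ∈ F, IsLUB (Set.range (c j)) (s j)) :
    IsLUB (Set.range fun m => ∑ j ∈ F, c j m) (∑ j ∈ F, s j) := by
  induction F using Finset.cons_induction with
  | empty => simp only [Finset.sum_empty]; exact isLUB_constRange 0
  | cons a t hat ih =>
    simp only [Finset.sum_cons]
    exact isLUB_addChain (hm a (Finset.mem_cons_self a t))
      (monotone_finsetSum fun j hj => hm j (Finset.mem_cons_of_mem hj))
      (hl a (Finset.mem_cons_self a t))
      (ih (fun j hj => hm j (Finset.mem_cons_of_mem hj))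
        (fun j hj => hl j (Finset.mem_cons_of_mem hj)))

lemma exists_chain_partialSums {T : Type} (S : Set T) (f : T → K) (hS : S.Countable) :
    ∃ g : ℕ → K, Monotone g ∧ (∀ n, g n ∈ partialSums S f) ∧
      IsLUB (Set.range g) (setSum S f) ∧ IsLUB (partialSums S f) (setSum S f) := by
  obtain ⟨g, hmono, hmem, hcof⟩ :
      ∃ g : ℕ → K, Monotone g ∧ (∀ n, g n ∈ partialSums S f) ∧
        ∀ x ∈ partialSums S f, ∃ n, x ≤ g n := by
    rcases S.eq_empty_or_nonempty with rfl | hne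
    · refine ⟨fun _ => 0, monotone_const, fun n => ⟨∅, by simp, by simp⟩, ?_⟩
      rintro x ⟨F, hF, rfl⟩
      have : F = ∅ := Finset.coe_eq_empty.mp (Set.subset_empty_iff.mp hF)
      subst this
      exact ⟨0, by simp⟩
    · obtain ⟨e, he⟩ := Set.Countable.exists_eq_range hS hne
      refine ⟨fun n => ∑ t ∈ (Finset.range n).image e, f t, ?_, ?_, ?_⟩
      · intro m n hmn
        exact ocs_sum_le_sum_of_subset
          (Finset.image_subset_image (Finset.range_subset_range.mpr hmn)) f
      · intro n
        refine ⟨_, ?_, rfl⟩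
        intro x hx
        obtain ⟨m, -, rfl⟩ := Finset.mem_image.mp (Finset.mem_coe.mp hx)
        rw [he]
        exact ⟨m, rfl⟩
      · rintro x ⟨F, hF, rfl⟩
        set N := F.sup (fun t => if h : ∃ n, e n = t then h.choose + 1 else 0) with hN
        refine ⟨N, ocs_sum_le_sum_of_subset ?_ f⟩
        intro t ht
        have htS : t ∈ S := hF ht
        have hex : ∃ n, e n = t := by rw [he] at htS; exact htS
        refine Finset.mem_image.mpr ⟨hex.choose, Finset.mem_range.mpr ?_, hex.choose_spec⟩
        have hle : (if h : ∃ n, e n = t then h.choose + 1 else 0) ≤ N :=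
          Finset.le_sup (f := fun t => if h : ∃ n, e n = t then h.choose + 1 else 0) ht
        rw [dif_pos hex] at hle
        omega
  obtain ⟨s, hs⟩ := OmegaCommSemiring.chain_lub g hmono
  have hps : IsLUB (partialSums S f) s := by
    constructor
    · intro x hx
      obtain ⟨n, hn⟩ := hcof x hx
      exact hn.trans (hs.1 ⟨n, rfl⟩)
    · intro b hb
      refine hs.2 ?_
      rintro y ⟨n, rfl⟩
      exact hb (hmem n)
  have hex : ∃ z, IsLUB (partialSums S f) z := ⟨s, hps⟩
  have heq : setSum S f = s := by
    unfold setSum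
    rw [dif_pos hex]
    exact hex.choose_spec.unique hps
  rw [heq]
  exact ⟨g, hmono, hmem, hs, hps⟩

lemma isLUB_setSum {T : Type} {S : Set T} {f : T → K} (hS : S.Countable) :
    IsLUB (partialSums S f) (setSum S f) :=
  (exists_chain_partialSums S f hS).choose_spec.2.2.2

lemma le_setSum {T : Type} {S : Set T} {f : T → K} (hS : S.Countable) {x : K}
    (hx : x ∈ partialSums S f) : x ≤ setSum S f :=
  (isLUB_setSum hS).1 hx

lemma setSum_le {T : Type} {S : Set T} {f : T → K} (hS : S.Countable) {c : K}
    (h : ∀ x ∈ partialSums S f, x ≤ c) : setSum S f ≤ c :=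
  (isLUB_setSum hS).2 h

end OrderLemmas
section Trees

variable {P C : Type}

/-- The constants occurring in an atom. -/
def atomConsts {n : ℕ} (a : Atom P (Term C (Fin n))) : Set C := {c | Term.const c ∈ a.args}

/-- The constants occurring in a rule. -/
def ruleConsts (r : Rule P C) : Set C :=
  atomConsts r.head ∪ ⋃ i : Fin r.nbody, atomConsts (r.body i)

/-- The constants occurring in a program or a database. -/
def baseConsts (prog : Set (Rule P C)) (D : Set (Fact P C)) : Set C :=
  dbConsts D ∪ ⋃ r ∈ prog, ruleConsts r

lemma atomConsts_finite {n : ℕ} (a : Atom P (Term C (Fin n))) : (atomConsts a).Finite := by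
  have h2 : atomConsts a
      = (fun c => (Term.const c : Term C (Fin n))) ⁻¹' {t | t ∈ a.args} := rfl
  rw [h2]
  exact Set.Finite.preimage (fun x _ y _ h => by injection h) a.args.finite_toSet

lemma baseConsts_finite {prog : Set (Rule P C)} {D : Set (Fact P C)}
    (hprog : prog.Finite) (hD : D.Finite) : (baseConsts prog D).Finite := by
  apply Set.Finite.union
  · have : dbConsts D = ⋃ a ∈ D, {c | c ∈ a.args} := by
      ext c; simp [dbConsts]
    rw [this]
    exact hD.biUnion fun a _ => a.args.finite_toSet
  · exact hprog.biUnion fun r _ =>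
      (atomConsts_finite _).union (Set.finite_iUnion fun i => atomConsts_finite _)

variable {prog : Set (Rule P C)} {D : Set (Fact P C)}

lemma DTree.root_consts : ∀ {a : Fact P C} (_ : DTree prog D a),
    ∀ c ∈ a.args, c ∈ baseConsts prog D := by
  intro a t
  induction t with
  | leaf a ha =>
    intro c hc
    exact Or.inl ⟨a, ha, hc⟩
  | node r hr σ ch ih =>
    intro c hc
    obtain ⟨tm, htm, rfl⟩ := List.mem_map.mp hc
    cases tm with
    | const c' =>
      exact Or.inr (Set.mem_biUnion hr (Or.inl htm))
    | var v =>
      obtain ⟨i, hi⟩ := r.vars_in_body v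
      exact ih i _ (List.mem_map.mpr ⟨Term.var v, hi, rfl⟩)

lemma sigma_mem_of_children {r : Rule P C} {σ : Fin r.nvars → C}
    (ch : ∀ i : Fin r.nbody, DTree prog D ((r.body i).subst σ)) (v : Fin r.nvars) :
    σ v ∈ baseConsts prog D := by
  obtain ⟨i, hi⟩ := r.vars_in_body v
  exact (ch i).root_consts _ (List.mem_map.mpr ⟨Term.var v, hi, rfl⟩)

/-- An encoding of derivation trees into natural numbers. -/
noncomputable def encTree (eR : Rule P C → ℕ) (eC : C → ℕ) :
    ∀ {a : Fact P C}, DTree prog D a → ℕ :=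
  fun t =>
    DTree.rec (motive := fun _ _ => ℕ)
      (fun _ _ => 0)
      (fun r _ σ _ ih =>
        Nat.pair (eR r)
          (Nat.pair (Encodable.encode (List.ofFn fun v => eC (σ v)))
            (Encodable.encode (List.ofFn ih))) + 1) t

lemma encTree_leaf (eR : Rule P C → ℕ) (eC : C → ℕ) {a : Fact P C} (ha : a ∈ D) :
    encTree eR eC (DTree.leaf a ha : DTree prog D a) = 0 := rfl

lemma encTree_node (eR : Rule P C → ℕ) (eC : C → ℕ) {r : Rule P C} (hr : r ∈ prog)
    (σ : Fin r.nvars → C) (ch : ∀ i : Fin r.nbody, DTree prog D ((r.body i).subst σ)) :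
    encTree eR eC (DTree.node r hr σ ch) =
      Nat.pair (eR r)
        (Nat.pair (Encodable.encode (List.ofFn fun v => eC (σ v)))
          (Encodable.encode (List.ofFn fun i => encTree eR eC (ch i)))) + 1 := rfl

lemma encTree_injAux {eR : Rule P C → ℕ} {eC : C → ℕ}
    (hR : Set.InjOn eR prog) (hC : Set.InjOn eC (baseConsts prog D)) :
    ∀ {a₁ : Fact P C} (t₁ : DTree prog D a₁) {a₂ : Fact P C} (t₂ : DTree prog D a₂),
      a₁ = a₂ → encTree eR eC t₁ = encTree eR eC t₂ → HEq t₁ t₂ := by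
  intro a₁ t₁
  induction t₁ with
  | leaf a ha =>
    intro a₂ t₂ he henc
    cases t₂ with
    | leaf b hb => subst he; exact heq_of_eq rfl
    | node r' hr' σ' ch' =>
      rw [encTree_leaf, encTree_node] at henc
      omega
  | node r hr σ ch ih =>
    intro a₂ t₂ he henc
    cases t₂ with
    | leaf b hb =>
      rw [encTree_node, encTree_leaf] at henc
      omega
    | node r' hr' σ' ch' =>
      rw [encTree_node, encTree_node] at henc
      have h0 : Nat.pair (eR r)
          (Nat.pair (Encodable.encode (List.ofFn fun v => eC (σ v)))
            (Encodable.encode (List.ofFn fun i => encTree eR eC (ch i))))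
        = Nat.pair (eR r')
          (Nat.pair (Encodable.encode (List.ofFn fun v => eC (σ' v)))
            (Encodable.encode (List.ofFn fun i => encTree eR eC (ch' i)))) := by omega
      obtain ⟨h1, h23⟩ := Nat.pair_eq_pair.mp h0
      obtain ⟨h2, h3⟩ := Nat.pair_eq_pair.mp h23
      have hrr : r = r' := hR hr hr' h1
      subst hrr
      have hσ : σ = σ' := by
        funext v
        have hl := List.ofFn_inj.mp (Encodable.encode_injective h2)
        exact hC (sigma_mem_of_children ch v) (sigma_mem_of_children ch' v) (congrFun hl v)
      subst hσ
      have hchl := List.ofFn_inj.mp (Encodable.encode_injective h3)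
      have hch : ch = ch' := by
        funext i
        exact eq_of_heq (ih i (ch' i) rfl (congrFun hchl i))
      subst hch
      exact heq_of_eq rfl

lemma countable_dtree (hprog : prog.Finite) (hD : D.Finite) (a : Fact P C) :
    Countable (DTree prog D a) := by
  haveI : Countable ↥prog := hprog.countable.to_subtype
  haveI : Countable ↥(baseConsts prog D) := (baseConsts_finite hprog hD).countable.to_subtype
  obtain ⟨fR, hfR⟩ := exists_injective_nat ↥prog
  obtain ⟨fC, hfC⟩ := exists_injective_nat ↥(baseConsts prog D)
  set eR : Rule P C → ℕ := fun r => if h : r ∈ prog then fR ⟨r, h⟩ else 0 with heR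
  set eC : C → ℕ := fun c => if h : c ∈ baseConsts prog D then fC ⟨c, h⟩ else 0 with heC
  have hR : Set.InjOn eR prog := by
    intro r1 h1 r2 h2 hrr
    rw [heR] at hrr
    simp only [dif_pos h1, dif_pos h2] at hrr
    exact congrArg Subtype.val (hfR hrr)
  have hC : Set.InjOn eC (baseConsts prog D) := by
    intro c1 h1 c2 h2 hcc
    rw [heC] at hcc
    simp only [dif_pos h1, dif_pos h2] at hcc
    exact congrArg Subtype.val (hfC hcc)
  exact (countable_iff_exists_injective _).mpr
    ⟨encTree eR eC, fun t₁ t₂ h => eq_of_heq (encTree_injAux hR hC t₁ t₂ rfl h)⟩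

lemma headAgree_subst_eq {r : Rule P C} {σ σ' : Fin r.nvars → C} (h : headAgree r σ σ') :
    r.head.subst σ' = r.head.subst σ := by
  simp only [Atom.subst, Atom.mk.injEq, true_and]
  apply List.map_congr_left
  intro tm htm
  cases tm with
  | const c => rfl
  | var v => exact h v htm

/-- Change the root fact of a derivation tree along an equality. -/
def DTree.recast {a b : Fact P C} (e : a = b) (t : DTree prog D a) : DTree prog D b := e ▸ t

lemma DTree.weight_recast {K : Type} [CommSemiring K] (lam : Fact P C → K)
    {a b : Fact P C} (e : a = b) (t : DTree prog D a) :
    (t.recast e).weight lam = t.weight lam := by subst e; rfl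

lemma DTree.heq_recast {a b : Fact P C} (e : a = b) (t : DTree prog D a) :
    HEq (t.recast e) t := by subst e; exact HEq.rfl

/-- Unpack the top node of a derivation tree. -/
def DTree.unpack : ∀ {a : Fact P C}, DTree prog D a →
    Option ((r : Rule P C) × (σ : Fin r.nvars → C) ×
      (∀ i : Fin r.nbody, DTree prog D ((r.body i).subst σ)))
  | _, .leaf _ _ => none
  | _, .node r _ σ ch => some ⟨r, σ, ch⟩

lemma DTree.unpack_congr {a b : Fact P C} (e : a = b) {t : DTree prog D a}
    {u : DTree prog D b} (h : HEq t u) : t.unpack = u.unpack := by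
  subst e; rw [eq_of_heq h]

lemma DTree.node_inj {r : Rule P C} {hr₁ hr₂ : r ∈ prog} {σ₁ σ₂ : Fin r.nvars → C}
    {ch₁ : ∀ i, DTree prog D ((r.body i).subst σ₁)}
    {ch₂ : ∀ i, DTree prog D ((r.body i).subst σ₂)}
    (he : r.head.subst σ₁ = r.head.subst σ₂)
    (h : HEq (DTree.node r hr₁ σ₁ ch₁) (DTree.node r hr₂ σ₂ ch₂)) :
    ∃ hσ : σ₁ = σ₂, HEq ch₁ ch₂ := by
  have hun := DTree.unpack_congr he h
  simp only [DTree.unpack, Option.some.injEq] at hun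
  obtain ⟨-, h2⟩ := Sigma.mk.inj_iff.mp hun
  obtain ⟨hσ, hch⟩ := Sigma.mk.inj_iff.mp (eq_of_heq h2)
  exact ⟨hσ, hch⟩

end Trees
section Weights

variable {P C K : Type} {prog : Set (Rule P C)} {D : Set (Fact P C)}

lemma DTree.weight_leaf [CommSemiring K] (lam : Fact P C → K) {a : Fact P C} (ha : a ∈ D) :
    (DTree.leaf a ha : DTree prog D a).weight lam = lam a := rfl

lemma DTree.weight_node [CommSemiring K] (lam : Fact P C → K) {r : Rule P C} (hr : r ∈ prog)
    (σ : Fin r.nvars → C) (ch : ∀ i : Fin r.nbody, DTree prog D ((r.body i).subst σ)) :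
    (DTree.node r hr σ ch).weight lam = ∏ i : Fin r.nbody, (ch i).weight lam := rfl

end Weights

section Main

variable {P C K : Type} [OmegaCommSemiring K] {prog : Set (Rule P C)}

lemma at_isLUB (db : AnnDB P C K) (hprog : prog.Finite) (hfin : db.facts.Finite)
    (a : Fact P C) :
    IsLUB (partialSums (Set.univ : Set (DTree prog db.facts a)) fun t => t.weight db.ann)
      (AT prog db a) := by
  haveI := countable_dtree hprog hfin a
  exact isLUB_setSum Set.countable_univ

lemma ruleTarget_le (db : AnnDB P C K) (hprog : prog.Finite) (hfin : db.facts.Finite)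
    {r : Rule P C} (hr : r ∈ prog) (σ : Fin r.nvars → C) :
    setSum {σ' : Fin r.nvars → C |
        (∀ i, (r.body i).subst σ' ∈ {a : Fact P C | Nonempty (DTree prog db.facts a)}) ∧
          headAgree r σ σ'}
      (fun σ' => ∏ i : Fin r.nbody, AT prog db ((r.body i).subst σ'))
      ≤ AT prog db (r.head.subst σ) := by
  haveI hcnt : ∀ b : Fact P C, Countable (DTree prog db.facts b) :=
    countable_dtree hprog hfin
  set S' := {σ' : Fin r.nvars → C |
      (∀ i, (r.body i).subst σ' ∈ {a : Fact P C | Nonempty (DTree prog db.facts a)}) ∧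
        headAgree r σ σ'} with hS'
  have hS'sub : S' ⊆ Set.univ.pi fun _ : Fin r.nvars => baseConsts prog db.facts := by
    intro σ' hσ' v _
    obtain ⟨i, hi⟩ := r.vars_in_body v
    exact (hσ'.1 i).some.root_consts _ (List.mem_map.mpr ⟨Term.var v, hi, rfl⟩)
  have hS'fin : S'.Finite :=
    Set.Finite.subset (Set.Finite.pi fun _ => baseConsts_finite hprog hfin) hS'sub
  refine setSum_le hS'fin.countable ?_
  rintro x ⟨F, hF, rfl⟩
  have hch : ∀ (σ' : Fin r.nvars → C) (i : Fin r.nbody),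
      ∃ g : ℕ → K, Monotone g ∧
        (∀ n, g n ∈ partialSums (Set.univ : Set (DTree prog db.facts ((r.body i).subst σ')))
          fun t => t.weight db.ann) ∧
        IsLUB (Set.range g) (AT prog db ((r.body i).subst σ')) := by
    intro σ' i
    obtain ⟨g, h1, h2, h3, -⟩ :=
      exists_chain_partialSums (Set.univ : Set (DTree prog db.facts ((r.body i).subst σ')))
        (fun t => t.weight db.ann) Set.countable_univ
    exact ⟨g, h1, h2, h3⟩
  choose c hcmono hcmem hclub using hch
  have hlub : IsLUB (Set.range fun m => ∑ σ' ∈ F, ∏ i : Fin r.nbody, c σ' i m)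
      (∑ σ' ∈ F, ∏ i : Fin r.nbody, AT prog db ((r.body i).subst σ')) :=
    isLUB_finsetSum F _ _
      (fun σ' _ => monotone_finsetProd fun i _ => hcmono σ' i)
      (fun σ' _ => isLUB_finsetProd Finset.univ _ _
        (fun i _ => hcmono σ' i) (fun i _ => hclub σ' i))
  refine hlub.2 ?_
  rintro x ⟨m, rfl⟩
  dsimp only
  have hG : ∀ (σ' : Fin r.nvars → C) (i : Fin r.nbody),
      ∃ Gr : Finset (DTree prog db.facts ((r.body i).subst σ')),
        c σ' i m = ∑ t ∈ Gr, t.weight db.ann := by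
    intro σ' i
    obtain ⟨Gr, -, hGr⟩ := hcmem σ' i m
    exact ⟨Gr, hGr⟩
  choose G hGeq using hG
  set B := F.sigma (fun σ' => Fintype.piFinset (fun i => G σ' i)) with hB
  have step1 : (∑ σ' ∈ F, ∏ i : Fin r.nbody, c σ' i m)
      = ∑ p ∈ B, ∏ i : Fin r.nbody, ((p.2 i).weight db.ann) := by
    rw [hB, Finset.sum_sigma]
    refine Finset.sum_congr rfl fun σ' _ => ?_
    rw [show (∏ i : Fin r.nbody, c σ' i m)
        = ∏ i : Fin r.nbody, ∑ t ∈ G σ' i, t.weight db.ann from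
      Finset.prod_congr rfl fun i _ => hGeq σ' i]
    rw [Finset.prod_univ_sum]
  rw [step1]
  have hagree : ∀ q : {p // p ∈ B}, r.head.subst q.1.1 = r.head.subst σ := fun q =>
    headAgree_subst_eq (hF (Finset.mem_coe.mpr (Finset.mem_sigma.mp q.2).1)).2
  set ψ : {p // p ∈ B} → DTree prog db.facts (r.head.subst σ) :=
    fun q => (DTree.node r hr q.1.1 q.1.2).recast (hagree q) with hψ
  have hinj : ∀ q₁ ∈ B.attach, ∀ q₂ ∈ B.attach, ψ q₁ = ψ q₂ → q₁ = q₂ := by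
    intro q₁ _ q₂ _ heq
    have hHeq : HEq (DTree.node r hr q₁.1.1 q₁.1.2) (DTree.node r hr q₂.1.1 q₂.1.2) := by
      have h1 : HEq (DTree.node r hr q₁.1.1 q₁.1.2) (ψ q₁) :=
        (DTree.heq_recast (hagree q₁) _).symm
      rw [heq] at h1
      exact h1.trans (DTree.heq_recast (hagree q₂) _)
    obtain ⟨hσ, hcheq⟩ := DTree.node_inj ((hagree q₁).trans (hagree q₂).symm) hHeq
    apply Subtype.ext
    obtain ⟨⟨s₁, t₁⟩, hm₁⟩ := q₁
    obtain ⟨⟨s₂, t₂⟩, hm₂⟩ := q₂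
    dsimp only at hσ hcheq ⊢
    subst hσ
    exact congrArg (Sigma.mk s₁) (eq_of_heq hcheq)
  calc (∑ p ∈ B, ∏ i : Fin r.nbody, ((p.2 i).weight db.ann))
      = ∑ q ∈ B.attach, ∏ i : Fin r.nbody, ((q.1.2 i).weight db.ann) :=
        (Finset.sum_attach B fun p => ∏ i : Fin r.nbody, ((p.2 i).weight db.ann)).symm
    _ = ∑ q ∈ B.attach, (ψ q).weight db.ann := by
        refine Finset.sum_congr rfl fun q _ => ?_
        rw [hψ]
        rw [DTree.weight_recast, DTree.weight_node]
    _ = ∑ t ∈ B.attach.image ψ, t.weight db.ann := (Finset.sum_image hinj).symm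
    _ ≤ AT prog db (r.head.subst σ) :=
        (at_isLUB db hprog hfin _).1 ⟨B.attach.image ψ, Set.subset_univ _, rfl⟩

lemma isAnnModel_AT (db : AnnDB P C K) (hprog : prog.Finite) (hfin : db.facts.Finite) :
    IsAnnModel prog db {a : Fact P C | Nonempty (DTree prog db.facts a)} (AT prog db) := by
  refine ⟨fun a ha => ⟨.leaf a ha⟩, ?_, ?_⟩
  · intro a ha
    haveI := countable_dtree hprog hfin a
    refine le_setSum Set.countable_univ ⟨{DTree.leaf a ha}, Set.subset_univ _, ?_⟩
    rw [Finset.sum_singleton, DTree.weight_leaf]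
  · intro r hr σ hbody
    exact ⟨⟨.node r hr σ fun i => (hbody i).some⟩, ruleTarget_le db hprog hfin hr σ⟩

lemma isSetAnnModel_canonical (db : AnnDB P C K) :
    IsSetAnnModel prog db {a : Fact P C | Nonempty (DTree prog db.facts a)}
      (fun a => {k : K | ∃ t : DTree prog db.facts a, t.weight db.ann = k}) := by
  refine ⟨fun a ha => ⟨.leaf a ha⟩, fun a ha => ⟨.leaf a ha, rfl⟩, ?_⟩
  intro r hr σ hbody
  refine ⟨⟨.node r hr σ fun i => (hbody i).some⟩, ?_⟩
  intro g hg
  choose t ht using hg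
  refine ⟨.node r hr σ t, ?_⟩
  rw [DTree.weight_node]
  exact Finset.prod_congr rfl fun i _ => ht i

end Main
/-- `AM ⊑ AT` and `SAM ⊑ AT`. -/
theorem statement_0 (P C K : Type) [OmegaCommSemiring K]
    (prog : Set (Rule P C)) (hprog : prog.Finite)
    (db : AnnDB P C K) (hfin : db.facts.Finite)
    (hann : ∀ a ∈ db.facts, db.ann a ≠ 0) (α : Fact P C) :
    ((∀ S : Set K, ∃ z, IsGLB S z) → AM prog db α ≤ AT prog db α)
      ∧ SAM prog db α ≤ AT prog db α := by
  constructor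
  · intro hglb
    unfold AM
    split_ifs with hent
    · have hmem : AT prog db α ∈ {x : K | ∃ I μ, IsAnnModel prog db I μ ∧ μ α = x} :=
        ⟨_, _, isAnnModel_AT db hprog hfin, rfl⟩
      unfold setInf
      rw [dif_pos (hglb _)]
      exact (hglb _).choose_spec.1 hmem
    · exact ocs_zero_le _
  · haveI := countable_dtree hprog hfin α
    have hWc : ({k : K | ∃ t : DTree prog db.facts α, t.weight db.ann = k}).Countable :=
      Set.countable_range fun t : DTree prog db.facts α => t.weight db.ann
    have hsub : {k : K | ∀ I μ, IsSetAnnModel prog db I μ → k ∈ μ α}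
        ⊆ {k : K | ∃ t : DTree prog db.facts α, t.weight db.ann = k} :=
      fun k hk => hk _ _ (isSetAnnModel_canonical db)
    have h1 : IsLUB (partialSums {k : K | ∀ I μ, IsSetAnnModel prog db I μ → k ∈ μ α}
        (id : K → K)) (SAM prog db α) := isLUB_setSum (hWc.mono hsub)
    have h2 := at_isLUB db hprog hfin α
    refine h1.mono h2 ?_
    rintro x ⟨F, hF, rfl⟩
    have hex : ∀ k : {k : K // k ∈ F}, ∃ t : DTree prog db.facts α, t.weight db.ann = k.1 :=
      fun k => hsub (hF k.2)
    choose ψ hψ using hex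
    have hinj : ∀ q₁ ∈ F.attach, ∀ q₂ ∈ F.attach, ψ q₁ = ψ q₂ → q₁ = q₂ := by
      intro q₁ _ q₂ _ h
      apply Subtype.ext
      rw [← hψ q₁, ← hψ q₂, h]
    refine ⟨F.attach.image ψ, Set.subset_univ _, ?_⟩
    rw [Finset.sum_image hinj]
    exact (Finset.sum_attach F id).symm.trans
      (Finset.sum_congr rfl fun q _ => (hψ q).symm)

end Datalog
end

section
/- The naive execution provenance semantics equals the all-tree semantics: for every Datalog program Σ, annotated database (D,K,λ) with K a commutative ω-continuous semiring, and fact α, NE(Σ,D,K,λ,α) = AT(Σ,D,K,λ,α). -/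
attribute [local instance] Classical.propDecidable

namespace Datalog

variable {P C K : Type}

/-! ### Auxiliary development for statement 4 -/

section Statement4Aux

variable {P C K : Type}

/-- Constants appearing as arguments of facts in `I`. -/
def argsOf (I : Set (Fact P C)) : Set C := { c | ∃ a ∈ I, c ∈ a.args }

lemma argsOf_finite {I : Set (Fact P C)} (h : I.Finite) : (argsOf I).Finite := by
  have he : argsOf I = ⋃ a ∈ I, { c | c ∈ a.args } := by
    ext c; simp [argsOf]
  rw [he]
  exact h.biUnion fun a _ => a.args.finite_toSet

/-- All pairs (rule, assignment) whose instantiated body lies in `I`. -/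
def VPall (prog : Set (Rule P C)) (I : Set (Fact P C)) :
    Set ((r : Rule P C) × (Fin r.nvars → C)) :=
  { p | p.1 ∈ prog ∧ ∀ i, (p.1.body i).subst p.2 ∈ I }

lemma sigma_mem_argsOf {I : Set (Fact P C)} {r : Rule P C} {σ : Fin r.nvars → C}
    (hb : ∀ i, (r.body i).subst σ ∈ I) (v : Fin r.nvars) : σ v ∈ argsOf I := by
  obtain ⟨j, hj⟩ := r.vars_in_body v
  exact ⟨(r.body j).subst σ, hb j, by
    simp only [Atom.subst, List.mem_map]
    exact ⟨Term.var v, hj, rfl⟩⟩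

lemma VPall_finite {prog : Set (Rule P C)} {I : Set (Fact P C)} (hprog : prog.Finite)
    (hI : I.Finite) : (VPall prog I).Finite := by
  have hsub : VPall prog I ⊆
      ⋃ r ∈ prog, Sigma.mk r '' { σ : Fin r.nvars → C | ∀ v, σ v ∈ argsOf I } := by
    rintro ⟨r, σ⟩ ⟨h1, h2⟩
    exact Set.mem_biUnion h1 ⟨σ, fun v => sigma_mem_argsOf h2 v, rfl⟩
  exact (hprog.biUnion fun r _ =>
    ((Set.Finite.pi' fun _ => argsOf_finite hI).image _)).subset hsub

lemma derivable_finite {prog : Set (Rule P C)} {I : Set (Fact P C)} (hprog : prog.Finite)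
    (hI : I.Finite) : (derivable prog I).Finite := by
  have hsub : derivable prog I ⊆
      (fun p : (r : Rule P C) × (Fin r.nvars → C) => p.1.head.subst p.2) '' VPall prog I := by
    rintro a ⟨r, hr, σ, hb, hh⟩
    exact ⟨⟨r, σ⟩, ⟨hr, hb⟩, hh⟩
  exact ((VPall_finite hprog hI).image _).subset hsub

variable [CommSemiring K] {prog : Set (Rule P C)} {db : AnnDB P C K}

lemma naive_facts_finite (hprog : prog.Finite) (hfin : db.facts.Finite) (i : ℕ) :
    (naiveSeq prog db i).facts.Finite := by
  induction i with
  | zero => exact hfin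
  | succ i ih => exact Set.Finite.union (derivable_finite hprog ih) hfin

lemma db_subset_naive (i : ℕ) : db.facts ⊆ (naiveSeq prog db i).facts := by
  cases i with
  | zero => exact subset_rfl
  | succ i => exact Set.subset_union_right

lemma tree_mem {a : Fact P C} (t : DTree prog db.facts a) :
    ∀ i, t.depth ≤ i → a ∈ (naiveSeq prog db i).facts := by
  induction t with
  | leaf a ha => exact fun i _ => db_subset_naive i ha
  | node r hr σ ch ih =>
    intro i hle
    match i, hle with
    | i + 1, hle =>
      refine Set.mem_union_left _ ⟨r, hr, σ, fun j => ih j i ?_, rfl⟩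
      have h1 : (Finset.univ.sup fun j => (ch j).depth) + 1 ≤ i + 1 := hle
      have h2 : (ch j).depth ≤ Finset.univ.sup fun j => (ch j).depth :=
        Finset.le_sup (f := fun j => (ch j).depth) (Finset.mem_univ j)
      omega

lemma mem_tree : ∀ (i : ℕ) (a : Fact P C), a ∈ (naiveSeq prog db i).facts →
    ∃ t : DTree prog db.facts a, t.depth ≤ i := by
  intro i
  induction i with
  | zero => exact fun a ha => ⟨.leaf a ha, le_rfl⟩
  | succ i ih =>
    intro a ha
    rcases ha with h | h
    · obtain ⟨r, hr, σ, hb, rfl⟩ := h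
      choose ch hch using fun j => ih _ (hb j)
      refine ⟨.node r hr σ ch, ?_⟩
      exact Nat.succ_le_succ (Finset.sup_le fun j _ => hch j)
    · exact ⟨.leaf a h, Nat.zero_le _⟩

/-- The root data of a derivation tree: `none` for a leaf, the rule and assignment for a node. -/
def rootData {D : Set (Fact P C)} :
    ∀ {a : Fact P C}, DTree prog D a → Option ((r : Rule P C) × (Fin r.nvars → C))
  | _, .leaf _ _ => none
  | _, .node r _ σ _ => some ⟨r, σ⟩

/-- Cast a derivation tree along an equality of facts. -/
def castTree {D : Set (Fact P C)} {a b : Fact P C} (h : a = b) (t : DTree prog D a) :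
    DTree prog D b := h ▸ t

lemma rootData_inv {D : Set (Fact P C)} : ∀ {a : Fact P C} (t : DTree prog D a)
    (r : Rule P C) (σ : Fin r.nvars → C), rootData t = some ⟨r, σ⟩ →
    ∃ (hr : r ∈ prog) (ch : ∀ j, DTree prog D ((r.body j).subst σ))
      (ha : r.head.subst σ = a), t = castTree ha (DTree.node r hr σ ch) := by
  intro a t r σ h
  cases t with
  | leaf => simp [rootData] at h
  | node r' hr' σ' ch' =>
    simp only [rootData, Option.some.injEq] at h
    obtain ⟨h1, h2⟩ := Sigma.mk.inj_iff.mp h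
    subst h1
    have h2' : σ' = σ := eq_of_heq h2
    subst h2'
    exact ⟨hr', ch', rfl, rfl⟩

lemma node_inj {D : Set (Fact P C)} (r : Rule P C) (hr hr' : r ∈ prog) (σ : Fin r.nvars → C)
    (ch ch' : ∀ j, DTree prog D ((r.body j).subst σ))
    (h : DTree.node r hr σ ch = DTree.node r hr' σ ch') : ch = ch' := by
  injection h with h1 h2 h3

lemma trees_finite (hprog : prog.Finite) (hfin : db.facts.Finite) :
    ∀ (i : ℕ) (a : Fact P C), {t : DTree prog db.facts a | t.depth ≤ i}.Finite := by
  intro i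
  induction i with
  | zero =>
    intro a
    apply Set.Subsingleton.finite
    rintro t ht t' ht'
    cases t with
    | leaf _ h =>
      cases t' with
      | leaf _ h' => rfl
      | node r' hr' σ' ch' => exact absurd ht' (by simp [DTree.depth])
    | node r hr σ ch => exact absurd ht (by simp [DTree.depth])
  | succ i ih =>
    intro a
    have hVPa : {p : (r : Rule P C) × (Fin r.nvars → C) |
        p.1 ∈ prog ∧ (∀ j, (p.1.body j).subst p.2 ∈ (naiveSeq prog db i).facts) ∧
          p.1.head.subst p.2 = a}.Finite :=
      (VPall_finite hprog (naive_facts_finite hprog hfin i)).subset fun p hp => ⟨hp.1, hp.2.1⟩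
    haveI : Finite ↥{p : (r : Rule P C) × (Fin r.nvars → C) |
        p.1 ∈ prog ∧ (∀ j, (p.1.body j).subst p.2 ∈ (naiveSeq prog db i).facts) ∧
          p.1.head.subst p.2 = a} := hVPa.to_subtype
    haveI hchfin : ∀ (p : {p : (r : Rule P C) × (Fin r.nvars → C) |
        p.1 ∈ prog ∧ (∀ j, (p.1.body j).subst p.2 ∈ (naiveSeq prog db i).facts) ∧
          p.1.head.subst p.2 = a}) (j : Fin p.1.1.nbody),
        Finite {t : DTree prog db.facts ((p.1.1.body j).subst p.1.2) // t.depth ≤ i} :=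
      fun p j => (ih _).to_subtype
    apply Set.Finite.of_surjOn
      (f := fun x : PLift (a ∈ db.facts) ⊕
          ((p : {p : (r : Rule P C) × (Fin r.nvars → C) |
              p.1 ∈ prog ∧ (∀ j, (p.1.body j).subst p.2 ∈ (naiveSeq prog db i).facts) ∧
                p.1.head.subst p.2 = a}) × ∀ j : Fin p.1.1.nbody,
            {t : DTree prog db.facts ((p.1.1.body j).subst p.1.2) // t.depth ≤ i}) =>
        match x with
        | .inl h => DTree.leaf a h.down
        | .inr ⟨p, ch⟩ => castTree p.2.2.2 (DTree.node p.1.1 p.2.1 p.1.2 fun j => (ch j).1))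
      ?_ Set.finite_univ
    intro t ht
    cases t with
    | leaf _ h => exact ⟨.inl ⟨h⟩, trivial, rfl⟩
    | node r hr σ ch =>
      have hd : ∀ j, (ch j).depth ≤ i := by
        intro j
        have h1 : (Finset.univ.sup fun j => (ch j).depth) + 1 ≤ i + 1 := ht
        have h2 : (ch j).depth ≤ Finset.univ.sup fun j => (ch j).depth :=
          Finset.le_sup (f := fun j => (ch j).depth) (Finset.mem_univ j)
        omega
      exact ⟨.inr ⟨⟨⟨r, σ⟩, hr, fun j => tree_mem (ch j) i (hd j), rfl⟩,
        fun j => ⟨ch j, hd j⟩⟩, trivial, rfl⟩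


lemma node_part_sum (hprog : prog.Finite) (hfin : db.facts.Finite) (i : ℕ)
    (r : Rule P C) (hr : r ∈ prog) (σ : Fin r.nvars → C)
    (ih : ∀ b : Fact P C, (naiveSeq prog db i).ann b =
      ∑ᶠ t ∈ {t : DTree prog db.facts b | t.depth ≤ i}, t.weight db.ann) :
    ∑ᶠ t ∈ {t : DTree prog db.facts (r.head.subst σ) |
        t.depth ≤ i + 1 ∧ rootData t = some ⟨r, σ⟩}, t.weight db.ann =
      ∏ j, (naiveSeq prog db i).ann ((r.body j).subst σ) := by
  have hTfin : ∀ j : Fin r.nbody,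
      {t : DTree prog db.facts ((r.body j).subst σ) | t.depth ≤ i}.Finite :=
    fun j => trees_finite hprog hfin i _
  calc ∑ᶠ t ∈ {t : DTree prog db.facts (r.head.subst σ) |
        t.depth ≤ i + 1 ∧ rootData t = some ⟨r, σ⟩}, t.weight db.ann
      = ∑ᶠ ch ∈ (↑(Fintype.piFinset fun j => (hTfin j).toFinset) :
          Set (∀ j, DTree prog db.facts ((r.body j).subst σ))),
          ∏ j, (ch j).weight db.ann := by
        refine (finsum_mem_eq_of_bijOn (fun ch => DTree.node r hr σ ch)
          ⟨?_, ?_, ?_⟩ fun ch _ => rfl).symm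
        · intro ch hch
          have hch' : ∀ j, (ch j).depth ≤ i := by
            intro j
            exact ((hTfin j).mem_toFinset).mp ((Fintype.mem_piFinset.mp (Finset.mem_coe.mp hch)) j)
          exact ⟨Nat.succ_le_succ (Finset.sup_le fun j _ => hch' j), rfl⟩
        · intro ch _ ch' _ h
          exact node_inj r hr hr σ ch ch' h
        · rintro t ⟨hd, hroot⟩
          obtain ⟨hr'', ch, ha, hteq⟩ := rootData_inv t r σ hroot
          have hteq' : t = DTree.node r hr'' σ ch := hteq
          refine ⟨ch, ?_, ?_⟩
          · rw [Finset.mem_coe, Fintype.mem_piFinset]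
            intro j
            rw [(hTfin j).mem_toFinset]
            show (ch j).depth ≤ i
            rw [hteq'] at hd
            have h1 : (Finset.univ.sup fun j => (ch j).depth) + 1 ≤ i + 1 := hd
            have h2 : (ch j).depth ≤ Finset.univ.sup fun j => (ch j).depth :=
              Finset.le_sup (f := fun j => (ch j).depth) (Finset.mem_univ j)
            omega
          · exact hteq'.symm
    _ = ∑ ch ∈ Fintype.piFinset fun j => (hTfin j).toFinset,
          ∏ j, (ch j).weight db.ann := finsum_mem_coe_finset _ _
    _ = ∏ j, ∑ t ∈ (hTfin j).toFinset, t.weight db.ann :=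
        (Finset.prod_univ_sum _ _).symm
    _ = ∏ j, (naiveSeq prog db i).ann ((r.body j).subst σ) := by
        refine Finset.prod_congr rfl fun j _ => ?_
        rw [ih ((r.body j).subst σ)]
        exact (finsum_mem_eq_finite_toFinset_sum _ (hTfin j)).symm

lemma ann_eq_treeSum (hprog : prog.Finite) (hfin : db.facts.Finite) :
    ∀ (i : ℕ) (a : Fact P C), (naiveSeq prog db i).ann a =
      ∑ᶠ t ∈ {t : DTree prog db.facts a | t.depth ≤ i}, t.weight db.ann := by
  intro i
  induction i with
  | zero =>
    intro a
    by_cases ha : a ∈ db.facts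
    · have hset : {t : DTree prog db.facts a | t.depth ≤ 0} = {DTree.leaf a ha} := by
        ext t
        constructor
        · intro ht
          cases t with
          | leaf _ h => rfl
          | node r hr σ ch => exact absurd ht (by simp [DTree.depth])
        · rintro rfl
          exact Nat.le_refl 0
      rw [finsum_mem_congr hset fun _ _ => rfl, finsum_mem_singleton]
      rfl
    · have hset : {t : DTree prog db.facts a | t.depth ≤ 0} = ∅ := by
        ext t
        simp only [Set.mem_empty_iff_false, iff_false]
        intro ht
        cases t with
        | leaf _ h => exact ha h
        | node r hr σ ch => exact absurd ht (by simp [DTree.depth])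
      rw [finsum_mem_congr hset fun _ _ => rfl, finsum_mem_empty]
      exact db.ann_eq_zero a ha
  | succ i ih =>
    intro a
    have hNfin := naive_facts_finite hprog hfin (db := db) i
    have hSfin : {t : DTree prog db.facts a | t.depth ≤ i + 1}.Finite :=
      trees_finite hprog hfin (i + 1) a
    have hVPa : {p : (r : Rule P C) × (Fin r.nvars → C) |
        p.1 ∈ prog ∧ (∀ j, (p.1.body j).subst p.2 ∈ (naiveSeq prog db i).facts) ∧
          p.1.head.subst p.2 = a}.Finite :=
      (VPall_finite hprog hNfin).subset fun p hp => ⟨hp.1, hp.2.1⟩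
    have hstep1 : (Tcons prog (naiveSeq prog db i)).ann a =
        ∑ᶠ p ∈ {p : (r : Rule P C) × (Fin r.nvars → C) |
          p.1 ∈ prog ∧ (∀ j, (p.1.body j).subst p.2 ∈ (naiveSeq prog db i).facts) ∧
            p.1.head.subst p.2 = a},
          ∏ j, (naiveSeq prog db i).ann ((p.1.body j).subst p.2) := by
      show (if a ∈ derivable prog (naiveSeq prog db i).facts
          then ruleSum prog (naiveSeq prog db i).facts (naiveSeq prog db i).ann a else 0) = _
      by_cases hd : a ∈ derivable prog (naiveSeq prog db i).facts
      · rw [if_pos hd]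
        rfl
      · rw [if_neg hd]
        have hempty : {p : (r : Rule P C) × (Fin r.nvars → C) |
            p.1 ∈ prog ∧ (∀ j, (p.1.body j).subst p.2 ∈ (naiveSeq prog db i).facts) ∧
              p.1.head.subst p.2 = a} = ∅ := by
          ext p
          simp only [Set.mem_empty_iff_false, iff_false]
          rintro ⟨h1, h2, h3⟩
          exact hd ⟨p.1, h1, p.2, h2, h3⟩
        exact ((finsum_mem_congr hempty fun _ _ => rfl).trans finsum_mem_empty).symm
    have hstep2 : (∑ᶠ p ∈ {p : (r : Rule P C) × (Fin r.nvars → C) |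
          p.1 ∈ prog ∧ (∀ j, (p.1.body j).subst p.2 ∈ (naiveSeq prog db i).facts) ∧
            p.1.head.subst p.2 = a},
          ∏ j, (naiveSeq prog db i).ann ((p.1.body j).subst p.2)) =
        ∑ᶠ p ∈ {p : (r : Rule P C) × (Fin r.nvars → C) |
          p.1 ∈ prog ∧ (∀ j, (p.1.body j).subst p.2 ∈ (naiveSeq prog db i).facts) ∧
            p.1.head.subst p.2 = a},
          ∑ᶠ t ∈ {t : DTree prog db.facts a |
            t.depth ≤ i + 1 ∧ rootData t = some p}, t.weight db.ann := by
      refine finsum_mem_congr rfl ?_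
      rintro ⟨r, σ⟩ ⟨hr, hb, rfl⟩
      exact (node_part_sum hprog hfin i r hr σ ih).symm
    have hleafsum : db.ann a =
        ∑ᶠ t ∈ {t : DTree prog db.facts a | t.depth ≤ i + 1 ∧ rootData t = none},
          t.weight db.ann := by
      by_cases ha : a ∈ db.facts
      · have hset : {t : DTree prog db.facts a | t.depth ≤ i + 1 ∧ rootData t = none} =
            {DTree.leaf a ha} := by
          ext t
          constructor
          · rintro ⟨hd, hroot⟩
            cases t with
            | leaf _ h => rfl
            | node r hr σ ch => simp [rootData] at hroot
          · rintro rfl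
            exact ⟨Nat.zero_le _, rfl⟩
        rw [finsum_mem_congr hset fun _ _ => rfl, finsum_mem_singleton]
        rfl
      · have hset : {t : DTree prog db.facts a | t.depth ≤ i + 1 ∧ rootData t = none} =
            ∅ := by
          ext t
          simp only [Set.mem_empty_iff_false, iff_false]
          rintro ⟨hd, hroot⟩
          cases t with
          | leaf _ h => exact ha h
          | node r hr σ ch => simp [rootData] at hroot
        rw [finsum_mem_congr hset fun _ _ => rfl, finsum_mem_empty]
        exact db.ann_eq_zero a ha
    have hsplit : {t : DTree prog db.facts a | t.depth ≤ i + 1} =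
        {t : DTree prog db.facts a | t.depth ≤ i + 1 ∧ rootData t = none} ∪
          ⋃ p ∈ {p : (r : Rule P C) × (Fin r.nvars → C) |
            p.1 ∈ prog ∧ (∀ j, (p.1.body j).subst p.2 ∈ (naiveSeq prog db i).facts) ∧
              p.1.head.subst p.2 = a},
            {t : DTree prog db.facts a | t.depth ≤ i + 1 ∧ rootData t = some p} := by
      ext t
      constructor
      · intro ht
        cases t with
        | leaf _ h => exact Or.inl ⟨ht, rfl⟩
        | node r hr σ ch =>
          have hd : ∀ j, (ch j).depth ≤ i := by
            intro j
            have h1 : (Finset.univ.sup fun j => (ch j).depth) + 1 ≤ i + 1 := ht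
            have h2 : (ch j).depth ≤ Finset.univ.sup fun j => (ch j).depth :=
              Finset.le_sup (f := fun j => (ch j).depth) (Finset.mem_univ j)
            omega
          exact Or.inr (Set.mem_biUnion
            ⟨hr, fun j => tree_mem (ch j) i (hd j), rfl⟩ ⟨ht, rfl⟩)
      · intro ht
        rcases ht with ⟨hd, _⟩ | ht
        · exact hd
        · simp only [Set.mem_iUnion] at ht
          obtain ⟨p, hp, hd, _⟩ := ht
          exact hd
    have hpair : Set.PairwiseDisjoint
        {p : (r : Rule P C) × (Fin r.nvars → C) |
          p.1 ∈ prog ∧ (∀ j, (p.1.body j).subst p.2 ∈ (naiveSeq prog db i).facts) ∧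
            p.1.head.subst p.2 = a}
        (fun p => {t : DTree prog db.facts a |
          t.depth ≤ i + 1 ∧ rootData t = some p}) := by
      intro p hp q hq hne
      exact Set.disjoint_left.mpr fun t htp htq =>
        hne (Option.some.inj (htp.2.symm.trans htq.2))
    have hpartfin : ∀ p ∈ {p : (r : Rule P C) × (Fin r.nvars → C) |
          p.1 ∈ prog ∧ (∀ j, (p.1.body j).subst p.2 ∈ (naiveSeq prog db i).facts) ∧
            p.1.head.subst p.2 = a},
        {t : DTree prog db.facts a | t.depth ≤ i + 1 ∧ rootData t = some p}.Finite :=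
      fun p _ => hSfin.subset fun t ht => ht.1
    have hleaffin : {t : DTree prog db.facts a |
        t.depth ≤ i + 1 ∧ rootData t = none}.Finite :=
      hSfin.subset fun t ht => ht.1
    have hunionfin : (⋃ p ∈ {p : (r : Rule P C) × (Fin r.nvars → C) |
          p.1 ∈ prog ∧ (∀ j, (p.1.body j).subst p.2 ∈ (naiveSeq prog db i).facts) ∧
            p.1.head.subst p.2 = a},
        {t : DTree prog db.facts a |
          t.depth ≤ i + 1 ∧ rootData t = some p}).Finite := by
      refine hSfin.subset ?_
      intro t ht
      simp only [Set.mem_iUnion] at ht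
      obtain ⟨p, hp, hd, _⟩ := ht
      exact hd
    have hdisj : Disjoint
        {t : DTree prog db.facts a | t.depth ≤ i + 1 ∧ rootData t = none}
        (⋃ p ∈ {p : (r : Rule P C) × (Fin r.nvars → C) |
          p.1 ∈ prog ∧ (∀ j, (p.1.body j).subst p.2 ∈ (naiveSeq prog db i).facts) ∧
            p.1.head.subst p.2 = a},
          {t : DTree prog db.facts a | t.depth ≤ i + 1 ∧ rootData t = some p}) := by
      refine Set.disjoint_left.mpr ?_
      rintro t ⟨_, hnone⟩ ht
      simp only [Set.mem_iUnion] at ht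
      obtain ⟨p, hp, _, hsome⟩ := ht
      rw [hnone] at hsome
      exact Option.some_ne_none p hsome.symm
    calc (naiveSeq prog db (i + 1)).ann a
        = (Tcons prog (naiveSeq prog db i)).ann a + db.ann a := rfl
      _ = (∑ᶠ p ∈ {p : (r : Rule P C) × (Fin r.nvars → C) |
            p.1 ∈ prog ∧ (∀ j, (p.1.body j).subst p.2 ∈ (naiveSeq prog db i).facts) ∧
              p.1.head.subst p.2 = a},
            ∑ᶠ t ∈ {t : DTree prog db.facts a |
              t.depth ≤ i + 1 ∧ rootData t = some p}, t.weight db.ann) +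
          ∑ᶠ t ∈ {t : DTree prog db.facts a |
            t.depth ≤ i + 1 ∧ rootData t = none}, t.weight db.ann := by
          rw [hstep1, hstep2, ← hleafsum]
      _ = (∑ᶠ t ∈ ⋃ p ∈ {p : (r : Rule P C) × (Fin r.nvars → C) |
            p.1 ∈ prog ∧ (∀ j, (p.1.body j).subst p.2 ∈ (naiveSeq prog db i).facts) ∧
              p.1.head.subst p.2 = a},
            {t : DTree prog db.facts a |
              t.depth ≤ i + 1 ∧ rootData t = some p}, t.weight db.ann) +
          ∑ᶠ t ∈ {t : DTree prog db.facts a |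
            t.depth ≤ i + 1 ∧ rootData t = none}, t.weight db.ann := by
          rw [finsum_mem_biUnion hpair hVPa hpartfin]
      _ = ∑ᶠ t ∈ ({t : DTree prog db.facts a | t.depth ≤ i + 1 ∧ rootData t = none} ∪
            ⋃ p ∈ {p : (r : Rule P C) × (Fin r.nvars → C) |
              p.1 ∈ prog ∧ (∀ j, (p.1.body j).subst p.2 ∈ (naiveSeq prog db i).facts) ∧
                p.1.head.subst p.2 = a},
              {t : DTree prog db.facts a |
                t.depth ≤ i + 1 ∧ rootData t = some p}), t.weight db.ann := by
          rw [finsum_mem_union hdisj hleaffin hunionfin, add_comm]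
      _ = ∑ᶠ t ∈ {t : DTree prog db.facts a | t.depth ≤ i + 1}, t.weight db.ann :=
          (finsum_mem_congr hsplit fun _ _ => rfl).symm

end Statement4Aux

/-- the naive execution semantics equals the all-tree semantics. -/
theorem statement_4 (P C K : Type) [OmegaCommSemiring K]
    (prog : Set (Rule P C)) (hprog : prog.Finite)
    (db : AnnDB P C K) (hfin : db.facts.Finite)
    (hann : ∀ a ∈ db.facts, db.ann a ≠ 0) (α : Fact P C) :
    NE prog db α = AT prog db α := by
  have hfs : ∀ i, (naiveSeq prog db i).ann α =
      ∑ t ∈ (trees_finite hprog hfin i α).toFinset, t.weight db.ann := fun i =>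
    (ann_eq_treeSum hprog hfin i α).trans
      (finsum_mem_eq_finite_toFinset_sum _ (trees_finite hprog hfin i α))
  have hmono : Monotone fun i => (naiveSeq prog db i).ann α := by
    apply monotone_nat_of_le_succ
    intro i
    rw [OmegaCommSemiring.le_iff_exists_add]
    have hsub : (trees_finite hprog hfin i α).toFinset ⊆
        (trees_finite hprog hfin (i + 1) α).toFinset := by
      intro t ht
      rw [Set.Finite.mem_toFinset] at ht ⊢
      exact le_trans ht (Nat.le_succ i)
    refine ⟨∑ t ∈ (trees_finite hprog hfin (i + 1) α).toFinset \
        (trees_finite hprog hfin i α).toFinset, t.weight db.ann, ?_⟩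
    simp only [hfs]
    rw [add_comm]
    exact Finset.sum_sdiff hsub
  obtain ⟨L, hL⟩ := OmegaCommSemiring.chain_lub _ hmono
  have key : IsLUB (partialSums (Set.univ : Set (DTree prog db.facts α))
      (fun t => t.weight db.ann)) L := by
    constructor
    · rintro x ⟨F, -, rfl⟩
      have hsub : F ⊆ (trees_finite hprog hfin (F.sup fun t => t.depth) α).toFinset := by
        intro t ht
        rw [Set.Finite.mem_toFinset]
        exact Finset.le_sup (f := fun t => t.depth) ht
      have h1 : (∑ t ∈ F, t.weight db.ann) ≤
          (naiveSeq prog db (F.sup fun t => t.depth)).ann α := by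
        rw [OmegaCommSemiring.le_iff_exists_add, hfs]
        exact ⟨_, by rw [add_comm]; exact Finset.sum_sdiff hsub⟩
      exact h1.trans (hL.1 ⟨F.sup fun t => t.depth, rfl⟩)
    · intro u hu
      refine hL.2 ?_
      rintro x ⟨i, rfl⟩
      exact hu ⟨(trees_finite hprog hfin i α).toFinset, Set.subset_univ _, hfs i⟩
  have hEx : ∃ s, IsLUB (partialSums (Set.univ : Set (DTree prog db.facts α))
      (fun t => t.weight db.ann)) s := ⟨L, key⟩
  have hAT : AT prog db α = L := by
    show setSum _ _ = L
    unfold setSum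
    rw [dif_pos hEx]
    exact hEx.choose_spec.unique key
  rw [hAT]
  unfold NE
  by_cases hmem : ∃ i, α ∈ (naiveSeq prog db i).facts
  · have hEx2 : ∃ s, IsLUB (Set.range fun i => (naiveSeq prog db i).ann α) s := ⟨L, hL⟩
    rw [if_pos hmem, dif_pos hEx2]
    exact hEx2.choose_spec.unique hL
  · rw [if_neg hmem]
    have hz : (fun i => (naiveSeq prog db i).ann α) = fun _ => (0 : K) :=
      funext fun i => (naiveSeq prog db i).ann_eq_zero α fun h => hmem ⟨i, h⟩
    rw [hz, Set.range_const] at hL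
    exact (hL.unique isLUB_singleton).symm

end Datalog
end

section
/- For every Datalog program Σ, annotated database (D,K,λ), and fact α such that Σ,D ⊨ α, the optimized naive evaluation sequence stabilizes: there exists k ≥ 0 such that I_{o,α}^ℓ(Σ,D,K,λ) = I_{o,α}^k(Σ,D,K,λ) for every ℓ ≥ k. -/
attribute [local instance] Classical.propDecidable

namespace Datalog

variable {P C K : Type}

lemma derivable_mono {prog : Set (Rule P C)} {I J : Set (Fact P C)} (h : I ⊆ J) :
    derivable prog I ⊆ derivable prog J := by
  rintro a ⟨r, hr, σ, hb, hh⟩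
  exact ⟨r, hr, σ, fun i => h (hb i), hh⟩

lemma naiveSeq_facts_mono [CommSemiring K] (prog : Set (Rule P C)) (db : AnnDB P C K) :
    ∀ i, (naiveSeq prog db i).facts ⊆ (naiveSeq prog db (i + 1)).facts := by
  intro i
  induction i with
  | zero => exact Set.subset_union_right
  | succ i ih =>
    show derivable prog _ ∪ db.facts ⊆ derivable prog _ ∪ db.facts
    exact Set.union_subset_union_left _ (derivable_mono ih)

lemma naiveSeq_facts_mono' [CommSemiring K] (prog : Set (Rule P C)) (db : AnnDB P C K)
    {i j : ℕ} (h : i ≤ j) : (naiveSeq prog db i).facts ⊆ (naiveSeq prog db j).facts := by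
  induction j with
  | zero => rw [Nat.le_zero.mp h]
  | succ j ih =>
    rcases Nat.lt_or_ge i (j + 1) with h' | h'
    · exact (ih (Nat.lt_succ_iff.mp h')).trans (naiveSeq_facts_mono prog db j)
    · rw [Nat.le_antisymm h h']

/-- `α` is eventually derived in the naive sequence. -/
lemma entails_mem_naiveSeq [CommSemiring K] (prog : Set (Rule P C)) (db : AnnDB P C K)
    (α : Fact P C) (hent : Entails prog db.facts α) :
    ∃ i, α ∈ (naiveSeq prog db i).facts := by
  set U : Set (Fact P C) := ⋃ i, (naiveSeq prog db i).facts with hU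
  have hsub : db.facts ⊆ U := Set.subset_iUnion (fun i => (naiveSeq prog db i).facts) 0
  have hclosed : ClosedUnder prog U := by
    intro r hr σ hbody
    -- each body fact is in some stage; take the max over all body atoms
    have : ∀ i : Fin r.nbody, ∃ n, (r.body i).subst σ ∈ (naiveSeq prog db n).facts := by
      intro i
      exact Set.mem_iUnion.mp (hbody i)
    choose f hf using this
    set N := Finset.univ.sup f with hN
    have hbodyN : ∀ i, (r.body i).subst σ ∈ (naiveSeq prog db N).facts := by
      intro i
      exact naiveSeq_facts_mono' prog db (Finset.le_sup (Finset.mem_univ i)) (hf i)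
    have : r.head.subst σ ∈ (naiveSeq prog db (N + 1)).facts :=
      Set.mem_union_left _ ⟨r, hr, σ, hbodyN, rfl⟩
    exact Set.mem_iUnion.mpr ⟨N + 1, this⟩
  exact Set.mem_iUnion.mp (hent U hsub hclosed)

/-- As long as `α` never appears, the optimized sequence coincides with the naive one. -/
lemma optSeq_eq_naiveSeq [CommSemiring K] (prog : Set (Rule P C)) (db : AnnDB P C K)
    (α : Fact P C) (h : ∀ i, α ∉ (optSeq prog db α i).facts) :
    ∀ i, optSeq prog db α i = naiveSeq prog db i := by
  intro i
  induction i with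
  | zero => rfl
  | succ i ih =>
    show (if α ∈ (optSeq prog db α i).facts then _ else _) = _
    rw [if_neg (h i), ih]
    rfl

/-- if `Σ, D ⊨ α` then the optimized naive evaluation sequence stabilizes. -/
theorem statement_5 (P C K : Type) [CommSemiring K]
    (prog : Set (Rule P C)) (hprog : prog.Finite)
    (db : AnnDB P C K) (hfin : db.facts.Finite)
    (hann : ∀ a ∈ db.facts, db.ann a ≠ 0) (α : Fact P C)
    (hent : Entails prog db.facts α) :
    ∃ k : ℕ, ∀ ℓ, k ≤ ℓ → optSeq prog db α ℓ = optSeq prog db α k := by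
  have hmem : ∃ k, α ∈ (optSeq prog db α k).facts := by
    by_contra h
    push_neg at h
    obtain ⟨i, hi⟩ := entails_mem_naiveSeq prog db α hent
    exact h i ((optSeq_eq_naiveSeq prog db α h i) ▸ hi)
  obtain ⟨k, hk⟩ := hmem
  refine ⟨k, fun ℓ hℓ => ?_⟩
  induction ℓ with
  | zero => rw [Nat.le_zero.mp hℓ]
  | succ ℓ ih =>
    rcases Nat.lt_or_ge k (ℓ + 1) with h' | h'
    · have heq := ih (Nat.lt_succ_iff.mp h')
      show (if α ∈ (optSeq prog db α ℓ).facts then _ else _) = _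
      rw [heq, if_pos hk]
    · rw [Nat.le_antisymm hℓ h']

end Datalog
end

section
/- The optimized execution provenance semantics equals the minimal-depth-tree semantics: for every Datalog program Σ, annotated database (D,K,λ) over a commutative semiring K, and fact α, OE(Σ,D,K,λ,α) = MDT(Σ,D,K,λ,α). -/
attribute [local instance] Classical.propDecidable

namespace Datalog

variable {P C K : Type}

section Statement6Aux

variable [CommSemiring K]

private lemma listConsts_finite {V : Type} (l : List (Term C V)) :
    {c : C | Term.const c ∈ l}.Finite := by
  refine Set.Finite.ofFinset
    (l.filterMap (fun t => match t with | Term.const c => some c | Term.var _ => none)).toFinset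
    (fun c => ?_)
  simp only [List.mem_toFinset, List.mem_filterMap, Set.mem_setOf_eq]
  constructor
  · rintro ⟨t, ht, he⟩
    cases t with
    | const c' => simp only [Option.some.injEq] at he; subst he; exact ht
    | var v => simp at he
  · intro h
    exact ⟨Term.const c, h, rfl⟩

/-- All constants that can appear in derived facts. -/
def Consts (prog : Set (Rule P C)) (db : AnnDB P C K) : Set C :=
  dbConsts db.facts ∪
    ⋃ r ∈ prog, ({c | ∃ i, Term.const c ∈ (r.body i).args} ∪ {c | Term.const c ∈ r.head.args})

lemma Consts_finite {prog : Set (Rule P C)} {db : AnnDB P C K} (hprog : prog.Finite)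
    (hfin : db.facts.Finite) : (Consts prog db).Finite := by
  apply Set.Finite.union
  · have h : dbConsts db.facts = ⋃ a ∈ db.facts, {c | c ∈ a.args} := by
      ext c; simp [dbConsts]
    rw [h]
    exact hfin.biUnion fun a _ => a.args.finite_toSet
  · refine hprog.biUnion fun r _ => Set.Finite.union ?_ (listConsts_finite _)
    have h : {c | ∃ i, Term.const c ∈ (r.body i).args}
        = ⋃ i : Fin r.nbody, {c | Term.const c ∈ (r.body i).args} := by
      ext c; simp
    rw [h]
    exact Set.finite_iUnion fun i => listConsts_finite _

variable (prog : Set (Rule P C)) (db : AnnDB P C K)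

lemma head_args_mem {r : Rule P C} (hr : r ∈ prog) {σ : Fin r.nvars → C}
    (hσ : ∀ v, σ v ∈ Consts prog db) : ∀ c ∈ (r.head.subst σ).args, c ∈ Consts prog db := by
  intro c hc
  simp only [Atom.subst, List.mem_map] at hc
  obtain ⟨tm, htm, rfl⟩ := hc
  cases tm with
  | var v => exact hσ v
  | const c' =>
    refine Or.inr ?_
    simp only [Set.mem_iUnion]
    exact ⟨r, hr, Or.inr htm⟩

lemma sigma_mem_Consts {r : Rule P C} (hr : r ∈ prog) {σ : Fin r.nvars → C}
    (hb : ∀ i, ∀ c ∈ ((r.body i).subst σ).args, c ∈ Consts prog db) :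
    ∀ v, σ v ∈ Consts prog db := by
  intro v
  obtain ⟨i, hi⟩ := r.vars_in_body v
  refine hb i (σ v) ?_
  simp only [Atom.subst, List.mem_map]
  exact ⟨Term.var v, hi, rfl⟩

lemma tree_args_mem : ∀ {a : Fact P C} (t : DTree prog db.facts a),
    ∀ c ∈ a.args, c ∈ Consts prog db := by
  intro a t
  induction t with
  | leaf b hb => intro c hc; exact Or.inl ⟨b, hb, hc⟩
  | node r hr σ ch ih =>
    exact head_args_mem prog db hr (sigma_mem_Consts prog db hr fun i => ih i)

/-- The pairs (rule, homomorphism) that can label a node deriving `a`. -/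
def PairSet (a : Fact P C) : Set ((r : Rule P C) × (Fin r.nvars → C)) :=
  {p | p.1 ∈ prog ∧ (∀ v, p.2 v ∈ Consts prog db) ∧ p.1.head.subst p.2 = a}

lemma PairSet_finite (hprog : prog.Finite) (hfin : db.facts.Finite) (a : Fact P C) :
    (PairSet prog db a).Finite := by
  have h1 : PairSet prog db a ⊆ ⋃ r ∈ prog, Sigma.mk r '' {σ | ∀ v, σ v ∈ Consts prog db} := by
    rintro ⟨r, σ⟩ ⟨h1, h2, _⟩
    simp only [Set.mem_iUnion]
    exact ⟨r, h1, σ, h2, rfl⟩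
  refine Set.Finite.subset (hprog.biUnion fun r _ => Set.Finite.image _ ?_) h1
  exact Set.Finite.pi' fun _ => Consts_finite hprog hfin

/-- Trees of depth at most `i`. -/
def treeSet (i : ℕ) (a : Fact P C) : Set (DTree prog db.facts a) := {t | t.depth ≤ i}

def leafSet (a : Fact P C) : Set (DTree prog db.facts a) :=
  {t | ∃ h : a ∈ db.facts, t = DTree.leaf a h}

def nodeSet (p : (r : Rule P C) × (Fin r.nvars → C)) (a : Fact P C) (i : ℕ) :
    Set (DTree prog db.facts a) :=
  {t | ∃ (hr : p.1 ∈ prog) (h : p.1.head.subst p.2 = a)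
      (ch : ∀ j, DTree prog db.facts ((p.1.body j).subst p.2)),
      (∀ j, (ch j).depth ≤ i) ∧ t = h ▸ DTree.node p.1 hr p.2 ch}

def labelOf : ∀ {a : Fact P C}, DTree prog db.facts a → Option ((r : Rule P C) × (Fin r.nvars → C))
  | _, DTree.leaf _ _ => none
  | _, DTree.node r _ σ _ => some ⟨r, σ⟩

lemma labelOf_cast {a b : Fact P C} (h : a = b) (t : DTree prog db.facts a) :
    labelOf prog db (h ▸ t) = labelOf prog db t := by subst h; rfl

lemma depth_cast {a b : Fact P C} (h : a = b) (t : DTree prog db.facts a) :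
    DTree.depth (h ▸ t) = t.depth := by subst h; rfl

lemma treeSet_decomp (i : ℕ) (a : Fact P C) :
    treeSet prog db (i + 1) a
      = leafSet prog db a ∪ ⋃ p ∈ PairSet prog db a, nodeSet prog db p a i := by
  ext t
  constructor
  · intro ht
    cases t with
    | leaf b hb => exact Or.inl ⟨hb, rfl⟩
    | node r hr σ ch =>
      right
      have hσ : ∀ v, σ v ∈ Consts prog db :=
        sigma_mem_Consts prog db hr fun j => tree_args_mem prog db (ch j)
      have hd : ∀ j, (ch j).depth ≤ i := by
        intro j
        simp only [treeSet, DTree.depth, Set.mem_setOf_eq] at ht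
        have h2 : (ch j).depth ≤ Finset.univ.sup fun j => (ch j).depth :=
          Finset.le_sup (f := fun j => (ch j).depth) (Finset.mem_univ j)
        omega
      simp only [Set.mem_iUnion]
      exact ⟨⟨r, σ⟩, ⟨hr, hσ, rfl⟩, hr, rfl, ch, hd, rfl⟩
  · intro ht
    rcases ht with h | h
    · obtain ⟨hb, rfl⟩ := h
      simp [treeSet, DTree.depth]
    · simp only [Set.mem_iUnion] at h
      obtain ⟨p, hp, hr, he, ch, hd, heq⟩ := h
      have hdep : t.depth = (DTree.node p.1 hr p.2 ch).depth := by
        rw [heq, depth_cast]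
      simp only [treeSet, Set.mem_setOf_eq, hdep, DTree.depth]
      have h2 := Finset.sup_le (s := Finset.univ) (fun j _ => hd j)
      omega

lemma treeSet_finite (hprog : prog.Finite) (hfin : db.facts.Finite) :
    ∀ (i : ℕ) (a : Fact P C), (treeSet prog db i a).Finite := by
  intro i
  induction i with
  | zero =>
    intro a
    apply Set.Subsingleton.finite
    intro t ht t' ht'
    cases t with
    | leaf b hb =>
      cases t' with
      | leaf b' hb' => rfl
      | node r hr σ ch => simp [treeSet, DTree.depth] at ht'
    | node r hr σ ch => simp [treeSet, DTree.depth] at ht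
  | succ i ih =>
    intro a
    rw [treeSet_decomp]
    apply Set.Finite.union
    · apply Set.Subsingleton.finite
      rintro t ⟨h1, rfl⟩ t' ⟨h2, rfl⟩
      rfl
    · refine Set.Finite.biUnion (PairSet_finite prog db hprog hfin a) ?_
      rintro ⟨r, σ⟩ ⟨hr, hσ, rfl⟩
      have hsub : nodeSet prog db ⟨r, σ⟩ (Atom.subst σ (Rule.head r)) i ⊆
          (fun ch => DTree.node r hr σ ch) ''
            {ch : ∀ j, DTree prog db.facts ((r.body j).subst σ) |
              ∀ j, ch j ∈ treeSet prog db i ((r.body j).subst σ)} := by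
        rintro t ⟨hr', h', ch, hd, rfl⟩
        exact ⟨ch, hd, rfl⟩
      exact Set.Finite.subset (Set.Finite.image _ (Set.Finite.pi' fun j => ih _)) hsub

lemma naive_facts (i : ℕ) :
    (naiveSeq prog db i).facts = {a | ∃ t : DTree prog db.facts a, t.depth ≤ i} := by
  induction i with
  | zero =>
    ext a
    simp only [naiveSeq, Set.mem_setOf_eq]
    constructor
    · intro h; exact ⟨DTree.leaf a h, le_refl 0⟩
    · rintro ⟨t, ht⟩
      cases t with
      | leaf b hb => exact hb
      | node r hr σ ch => simp [DTree.depth] at ht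
  | succ i ih =>
    ext a
    show a ∈ derivable prog (naiveSeq prog db i).facts ∪ db.facts ↔ _
    constructor
    · rintro (⟨r, hr, σ, hb, rfl⟩ | h)
      · have hb' : ∀ j, ∃ t : DTree prog db.facts ((r.body j).subst σ), t.depth ≤ i := by
          intro j
          have h2 := hb j
          rwa [ih] at h2
        choose ch hch using hb'
        refine ⟨DTree.node r hr σ ch, ?_⟩
        show (Finset.univ.sup fun j => (ch j).depth) + 1 ≤ i + 1
        have := Finset.sup_le (s := Finset.univ) (fun j _ => hch j)
        omega
      · exact ⟨DTree.leaf a h, by simp [DTree.depth]⟩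
    · rintro ⟨t, ht⟩
      cases t with
      | leaf b hb => exact Or.inr hb
      | node r hr σ ch =>
        refine Or.inl ⟨r, hr, σ, fun j => ?_, rfl⟩
        rw [ih]
        refine ⟨ch j, ?_⟩
        simp only [DTree.depth] at ht
        have h2 : (ch j).depth ≤ Finset.univ.sup fun j => (ch j).depth :=
          Finset.le_sup (f := fun j => (ch j).depth) (Finset.mem_univ j)
        omega

lemma Tcons_ann (I : AnnDB P C K) (a : Fact P C) :
    (Tcons prog I).ann a = ruleSum prog I.facts I.ann a := by
  show (if _ then _ else _) = _
  split_ifs with h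
  · rfl
  · symm
    apply finsum_eq_zero_of_forall_eq_zero
    intro p
    have hnc : ¬(p.1 ∈ prog ∧ (∀ i, (p.1.body i).subst p.2 ∈ I.facts)
        ∧ p.1.head.subst p.2 = a) := fun hc => h ⟨p.1, hc.1, p.2, hc.2.1, hc.2.2⟩
    rw [finsum_eq_if, if_neg hnc]

lemma naive_ann (hprog : prog.Finite) (hfin : db.facts.Finite) :
    ∀ (i : ℕ) (a : Fact P C),
      (naiveSeq prog db i).ann a = ∑ᶠ t ∈ treeSet prog db i a, DTree.weight db.ann t := by
  intro i
  induction i with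
  | zero =>
    intro a
    show db.ann a = _
    by_cases h : a ∈ db.facts
    · have hset : treeSet prog db 0 a = {DTree.leaf a h} := by
        ext t
        constructor
        · intro ht
          cases t with
          | leaf b hb => rfl
          | node r hr σ ch => simp [treeSet, DTree.depth] at ht
        · rintro rfl
          simp [treeSet, DTree.depth]
      rw [hset, finsum_mem_singleton]
      rfl
    · have hset : treeSet prog db 0 a = ∅ := by
        ext t
        simp only [Set.mem_empty_iff_false, iff_false]
        intro ht
        cases t with
        | leaf b hb => exact h hb
        | node r hr σ ch => simp [treeSet, DTree.depth] at ht
      rw [hset, finsum_mem_empty, db.ann_eq_zero a h]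
  | succ i ih =>
    intro a
    show (Tcons prog (naiveSeq prog db i)).ann a + db.ann a = _
    rw [Tcons_ann]
    set F := naiveSeq prog db i with hF
    set g : ((r : Rule P C) × (Fin r.nvars → C)) → K :=
      fun p => ∏ j : Fin p.1.nbody, F.ann ((p.1.body j).subst p.2) with hg
    have hrs : ruleSum prog F.facts F.ann a
        = ∑ᶠ p ∈ {p : (r : Rule P C) × (Fin r.nvars → C) |
            p.1 ∈ prog ∧ (∀ j, (p.1.body j).subst p.2 ∈ F.facts)
            ∧ p.1.head.subst p.2 = a}, g p := rfl
    set condSet : Set ((r : Rule P C) × (Fin r.nvars → C)) :=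
      {p | p.1 ∈ prog ∧ (∀ j, (p.1.body j).subst p.2 ∈ F.facts)
        ∧ p.1.head.subst p.2 = a} with hcondSet
    have hsub : condSet ⊆ PairSet prog db a := by
      rintro p ⟨h1, h2, h3⟩
      refine ⟨h1, ?_, h3⟩
      refine sigma_mem_Consts prog db h1 fun j c hc => ?_
      have h4 := h2 j
      rw [hF, naive_facts] at h4
      obtain ⟨t, _⟩ := h4
      exact tree_args_mem prog db t c hc
    have hPfin := PairSet_finite prog db hprog hfin a
    have hcfin := hPfin.subset hsub
    have hzero : ∀ p ∈ PairSet prog db a, p ∉ condSet → g p = 0 := by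
      rintro p ⟨h1, hσ, h3⟩ hnp
      have : ∃ j, (p.1.body j).subst p.2 ∉ F.facts := by
        by_contra hcon
        push_neg at hcon
        exact hnp ⟨h1, hcon, h3⟩
      obtain ⟨j, hj⟩ := this
      rw [hg]
      exact Finset.prod_eq_zero (Finset.mem_univ j) (F.ann_eq_zero _ hj)
    have hstep1 : ruleSum prog F.facts F.ann a = ∑ᶠ p ∈ PairSet prog db a, g p := by
      rw [hrs, finsum_mem_eq_finite_toFinset_sum _ hcfin,
        finsum_mem_eq_finite_toFinset_sum _ hPfin]
      refine Finset.sum_subset ?_ ?_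
      · intro p hp
        rw [Set.Finite.mem_toFinset] at hp ⊢
        exact hsub hp
      · intro p hp hnp
        rw [Set.Finite.mem_toFinset] at hp hnp
        exact hzero p hp hnp
    -- now compute the RHS
    rw [treeSet_decomp]
    have hdisj : Disjoint (leafSet prog db a)
        (⋃ p ∈ PairSet prog db a, nodeSet prog db p a i) := by
      rw [Set.disjoint_left]
      rintro t ⟨hb, rfl⟩ hmem
      simp only [Set.mem_iUnion] at hmem
      obtain ⟨p, hp, hr, he, ch, hd, heq⟩ := hmem
      have := congrArg (labelOf prog db) heq
      rw [labelOf_cast] at this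
      simp [labelOf] at this
    have hnfin : ∀ p ∈ PairSet prog db a, (nodeSet prog db p a i).Finite := by
      intro p hp
      refine Set.Finite.subset (treeSet_finite prog db hprog hfin (i + 1) a) ?_
      rw [treeSet_decomp]
      intro t ht
      exact Or.inr (Set.mem_biUnion hp ht)
    have hpd : (PairSet prog db a).PairwiseDisjoint (fun p => nodeSet prog db p a i) := by
      intro p hp q hq hne
      rw [Function.onFun, Set.disjoint_left]
      rintro t ⟨hr, he, ch, hd, heq⟩ ⟨hr', he', ch', hd', heq'⟩
      apply hne
      have e1 := congrArg (labelOf prog db) heq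
      have e2 := congrArg (labelOf prog db) heq'
      rw [labelOf_cast] at e1 e2
      rw [e1] at e2
      simp only [labelOf, Option.some.injEq] at e2
      obtain ⟨r1, σ1⟩ := p
      obtain ⟨r2, σ2⟩ := q
      exact e2
    rw [finsum_mem_union hdisj
      (Set.Finite.subset (treeSet_finite prog db hprog hfin (i + 1) a)
        (by rw [treeSet_decomp]; exact Set.subset_union_left))
      (Set.Finite.biUnion hPfin hnfin)]
    rw [finsum_mem_biUnion hpd hPfin hnfin]
    have hleaf : ∑ᶠ t ∈ leafSet prog db a, DTree.weight db.ann t = db.ann a := by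
      by_cases h : a ∈ db.facts
      · have hset : leafSet prog db a = {DTree.leaf a h} := by
          ext t
          constructor
          · rintro ⟨hb, rfl⟩; rfl
          · rintro rfl; exact ⟨h, rfl⟩
        rw [hset, finsum_mem_singleton]
        rfl
      · have hset : leafSet prog db a = ∅ := by
          ext t
          simp only [Set.mem_empty_iff_false, iff_false]
          rintro ⟨hb, rfl⟩
          exact h hb
        rw [hset, finsum_mem_empty, db.ann_eq_zero a h]
    have hnode : ∀ p ∈ PairSet prog db a,
        ∑ᶠ t ∈ nodeSet prog db p a i, DTree.weight db.ann t = g p := by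
      rintro ⟨r, σ⟩ ⟨hr, hσ, hhead⟩
      subst hhead
      have hset : nodeSet prog db ⟨r, σ⟩ (Atom.subst σ (Rule.head r)) i
          = (fun ch => DTree.node r hr σ ch) ''
            {ch : ∀ j, DTree prog db.facts ((r.body j).subst σ) |
              ∀ j, ch j ∈ treeSet prog db i ((r.body j).subst σ)} := by
        ext t
        constructor
        · rintro ⟨hr', h', ch, hd, rfl⟩
          exact ⟨ch, hd, rfl⟩
        · rintro ⟨ch, hch, rfl⟩
          exact ⟨hr, rfl, ch, hch, rfl⟩
      have hinj : Set.InjOn (fun ch => DTree.node r hr σ ch)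
          {ch : ∀ j, DTree prog db.facts ((r.body j).subst σ) |
            ∀ j, ch j ∈ treeSet prog db i ((r.body j).subst σ)} := by
        intro x _ y _ hxy
        injection hxy
      rw [hset, finsum_mem_image hinj]
      set T : ∀ j : Fin r.nbody, Finset (DTree prog db.facts ((r.body j).subst σ)) :=
        fun j => (treeSet_finite prog db hprog hfin i ((r.body j).subst σ)).toFinset with hT
      have hset2 : {ch : ∀ j, DTree prog db.facts ((r.body j).subst σ) |
            ∀ j, ch j ∈ treeSet prog db i ((r.body j).subst σ)}
          = ↑(Fintype.piFinset T) := by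
        ext ch
        simp [hT, Fintype.mem_piFinset, Set.Finite.mem_toFinset]
      rw [hset2, finsum_mem_coe_finset]
      have hw : ∀ ch : ∀ j, DTree prog db.facts ((r.body j).subst σ),
          DTree.weight db.ann (DTree.node r hr σ ch)
            = ∏ j : Fin r.nbody, DTree.weight db.ann (ch j) := fun ch => rfl
      calc ∑ ch ∈ Fintype.piFinset T, DTree.weight db.ann (DTree.node r hr σ ch)
          = ∑ ch ∈ Fintype.piFinset T, ∏ j, DTree.weight db.ann (ch j) := by
            exact Finset.sum_congr rfl fun ch _ => hw ch
        _ = ∏ j, ∑ t ∈ T j, DTree.weight db.ann t := (Finset.prod_univ_sum T _).symm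
        _ = g ⟨r, σ⟩ := by
            refine Finset.prod_congr rfl fun j _ => ?_
            rw [← finsum_mem_coe_finset, hT]
            rw [Set.Finite.coe_toFinset]
            exact (ih ((r.body j).subst σ)).symm
    rw [finsum_mem_congr rfl hnode, hleaf, hstep1]
    exact add_comm _ _

lemma opt_eq_naive_upto (α : Fact P C) (j : ℕ)
    (h : ∀ m, m < j → α ∉ (naiveSeq prog db m).facts) :
    ∀ i, i ≤ j → optSeq prog db α i = naiveSeq prog db i := by
  intro i
  induction i with
  | zero => intro _; rfl
  | succ i ih =>
    intro hij
    show (if α ∈ (optSeq prog db α i).facts then _ else _) = _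
    rw [ih (by omega), if_neg (h i (by omega))]
    rfl

lemma opt_frozen (α : Fact P C) (j : ℕ) (hj : α ∈ (optSeq prog db α j).facts) :
    ∀ ℓ, j ≤ ℓ → optSeq prog db α ℓ = optSeq prog db α j := by
  intro ℓ
  induction ℓ with
  | zero =>
    intro h
    have hj0 : j = 0 := by omega
    rw [hj0]
  | succ ℓ ih =>
    intro hl
    rcases Nat.lt_or_ge ℓ j with h | h
    · have : j = ℓ + 1 := by omega
      rw [this]
    · show (if α ∈ (optSeq prog db α ℓ).facts then _ else _) = _
      rw [ih h, if_pos hj]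

end Statement6Aux
/-- the optimized execution semantics equals the minimal-depth-tree
semantics. -/
theorem statement_6 (P C K : Type) [CommSemiring K]
    (prog : Set (Rule P C)) (hprog : prog.Finite)
    (db : AnnDB P C K) (hfin : db.facts.Finite)
    (hann : ∀ a ∈ db.facts, db.ann a ≠ 0) (α : Fact P C) :
    OE prog db α = MDT prog db α := by
  by_cases hex : Nonempty (DTree prog db.facts α)
  · obtain ⟨t0⟩ := hex
    have hfind : ∃ n, ∃ t : DTree prog db.facts α, t.depth ≤ n := ⟨t0.depth, t0, le_refl _⟩
    set d := Nat.find hfind with hd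
    obtain ⟨t1, ht1⟩ := Nat.find_spec hfind
    have hmin : ∀ t : DTree prog db.facts α, t.minimalDepth ↔ t.depth ≤ d := by
      intro t
      constructor
      · intro hm; exact le_trans (hm t1) ht1
      · intro hle t'
        exact le_trans hle (Nat.find_le ⟨t', le_refl _⟩)
    have hnot : ∀ m, m < d → α ∉ (naiveSeq prog db m).facts := by
      intro m hm hmem
      rw [naive_facts] at hmem
      exact Nat.find_min hfind hm hmem
    have heq : ∀ i, i ≤ d → optSeq prog db α i = naiveSeq prog db i :=
      opt_eq_naive_upto prog db α d hnot
    have hαd : α ∈ (optSeq prog db α d).facts := by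
      rw [heq d le_rfl, naive_facts]
      exact ⟨t1, ht1⟩
    have hfro : ∀ ℓ, d ≤ ℓ → optSeq prog db α ℓ = optSeq prog db α d :=
      opt_frozen prog db α d hαd
    have hstab : ∃ k, ∀ ℓ, k ≤ ℓ → optSeq prog db α ℓ = optSeq prog db α k := ⟨d, hfro⟩
    unfold OE
    rw [dif_pos hstab]
    have hc := hstab.choose_spec
    have hkd : optSeq prog db α hstab.choose = optSeq prog db α d := by
      rcases le_total hstab.choose d with h | h
      · exact (hc d h).symm
      · exact hfro hstab.choose h
    rw [hkd, heq d le_rfl, naive_ann prog db hprog hfin d α]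
    unfold MDT
    refine (finsum_congr fun t => ?_).symm
    have h3 : t.minimalDepth = (t ∈ treeSet prog db d α) := propext (hmin t)
    rw [h3]
  · have hmdt : MDT prog db α = 0 := by
      unfold MDT
      haveI : IsEmpty (DTree prog db.facts α) := not_nonempty_iff.mp hex
      exact finsum_of_isEmpty _
    have hno : ∀ m, α ∉ (naiveSeq prog db m).facts := by
      intro m hm
      rw [naive_facts] at hm
      exact hex ⟨hm.choose⟩
    have hON : ∀ i, optSeq prog db α i = naiveSeq prog db i := by
      intro i
      induction i with
      | zero => rfl
      | succ i ih =>
        show (if α ∈ (optSeq prog db α i).facts then _ else _) = _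
        rw [ih, if_neg (hno i)]
        rfl
    rw [hmdt]
    unfold OE
    split_ifs with h
    · rw [hON]
      exact (naiveSeq prog db h.choose).ann_eq_zero α (hno h.choose)
    · rfl

end Datalog
end
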